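/- arXiv:1803.02541 — 2 statements merged into one kernel-verified Lean document; each statement's English description precedes it below -/
import Mathlib

section
/- (Convergence of the asynchronous relaxed nonstationary multisplitting method.) Let A ∈ ℝ^{n×n} be an H₊-matrix, let D be its diagonal part and B = D − A, and set θ = ρ(D⁻¹B). Let ω ∈ (0, 2/(1+θ)). For i = 1, …, m, let A = M_i − N_i be splittings with ⟨A⟩ ≤ ⟨M_i⟩ − |N_i| entrywise. Let x* ∈ ℝⁿ be a solution of LCP(A, f). For each k ∈ ℕ let J(k) ⊆ {1, …, m} be nonempty and let s₁(k), …, s_m(k) ∈ ℕ satisfy: (1) s_i(k) ≤ k for all i and k; (2) lim_{k→∞} s_i(k) = ∞ for all i; (3) for each i, the set {k : i ∈ J(k)} is unbounded. Let η = θ / (Σ_{i=1}^m ‖E_i‖), and suppose q̃ is a positive integer such that ‖(⟨M_i⟩⁻¹|N_i|)^q‖ ≤ η for all q ≥ q̃ and all i = 1, …, m, where ‖·‖ is the matrix ∞-norm; let integers q(i,k) ≥ q̃ be given for all i and k. For each k and each i ∈ {1, …, m}, let E_{i,l}^{(k)} (i = 1, …, m) be nonnegative diagonal matrices with Σ_{i=1}^m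 E_{i,l}^{(k)} = I for each l ∈ J(k). Define sequences x^{k,l} ∈ ℝⁿ (l = 1, …, m) by x^{0,l} = x⁰ for all l, and for each k: for each i, set y^{i,0} = x^{s_i(k),i} and for v = 1, …, q(i,k) let y^{i,v} solve LCP(M_i, f + N_i y^{i,v−1}); then x^{k+1,l} = x^{k,l} if l ∉ J(k), and x^{k+1,l} = ω Σ_{i=1}^m E_{i,l}^{(k)} y^{i,q(i,k)} + (1−ω) x^{k,l} if l ∈ J(k). Then for each l, the sequence {x^{k,l}}_{k∈ℕ} converges to x* as k → ∞. -/
open Matrix Filter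

noncomputable section

/-- Comparison matrix `⟨A⟩`: `α_ii = |a_ii|`, `α_ij = -|a_ij|` for `i ≠ j`. -/
def cmpMat {n : ℕ} (A : Matrix (Fin n) (Fin n) ℝ) : Matrix (Fin n) (Fin n) ℝ :=
  Matrix.of fun i j => if i = j then |A i j| else -|A i j|

/-- Entrywise absolute value of a matrix. -/
def absMat {n : ℕ} (A : Matrix (Fin n) (Fin n) ℝ) : Matrix (Fin n) (Fin n) ℝ :=
  Matrix.of fun i j => |A i j|

/-- `A` is an M-matrix: nonpositive off-diagonal entries, nonsingular,
and entrywise nonnegative inverse. -/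
def IsMMat {n : ℕ} (A : Matrix (Fin n) (Fin n) ℝ) : Prop :=
  (∀ i j, i ≠ j → A i j ≤ 0) ∧ IsUnit A.det ∧ ∀ i j, 0 ≤ A⁻¹ i j

/-- `A` is an H-matrix: its comparison matrix is an M-matrix. -/
def IsHMat {n : ℕ} (A : Matrix (Fin n) (Fin n) ℝ) : Prop := IsMMat (cmpMat A)

/-- `A` is an H₊-matrix: an H-matrix with positive diagonal entries. -/
def IsHpMat {n : ℕ} (A : Matrix (Fin n) (Fin n) ℝ) : Prop :=
  IsHMat A ∧ ∀ i, 0 < A i i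

/-- Spectral radius of a real matrix: supremum of moduli of its complex eigenvalues. -/
def specRad {n : ℕ} (A : Matrix (Fin n) (Fin n) ℝ) : ℝ :=
  sSup {r : ℝ | ∃ μ : ℂ, μ ∈ spectrum ℂ (A.map Complex.ofReal) ∧ r = ‖μ‖}

/-- Matrix ∞-norm: maximum absolute row sum. -/
def infNorm {n : ℕ} (A : Matrix (Fin n) (Fin n) ℝ) : ℝ :=
  ⨆ i, ∑ j, |A i j|

/-- `x` solves the linear complementarity problem LCP(A, f):
`x ≥ 0`, `Ax - f ≥ 0`, `xᵀ(Ax - f) = 0`. -/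
def SolvesLCP {n : ℕ} (A : Matrix (Fin n) (Fin n) ℝ) (f x : Fin n → ℝ) : Prop :=
  (∀ j, 0 ≤ x j) ∧ (∀ j, f j ≤ (A *ᵥ x) j) ∧ ∑ j, x j * ((A *ᵥ x) j - f j) = 0

end

/-! ### Auxiliary material -/

noncomputable section AuxDefs

/-- The Jacobi-type iteration matrix of `X` (abs off-diagonal over diagonal). -/
def offT {n : ℕ} (X : Matrix (Fin n) (Fin n) ℝ) : Matrix (Fin n) (Fin n) ℝ :=
  Matrix.of fun p q => if p = q then 0 else |X p q| / X p p

end AuxDefs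

section Aux
variable {n : ℕ}

lemma matMulNonneg {X Y : Matrix (Fin n) (Fin n) ℝ}
    (hX : ∀ p q, 0 ≤ X p q) (hY : ∀ p q, 0 ≤ Y p q) : ∀ p q, 0 ≤ (X * Y) p q := by
  intro p q
  rw [Matrix.mul_apply]
  exact Finset.sum_nonneg fun r _ => mul_nonneg (hX p r) (hY r q)

lemma matPowNonneg {X : Matrix (Fin n) (Fin n) ℝ}
    (hX : ∀ p q, 0 ≤ X p q) : ∀ k, ∀ p q, 0 ≤ (X ^ k) p q := by
  intro k
  induction k with
  | zero => intro p q; simp [Matrix.one_apply]; positivity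
  | succ k ih => rw [pow_succ]; exact matMulNonneg ih hX

lemma matMulLe {X Y X' Y' : Matrix (Fin n) (Fin n) ℝ}
    (hX : ∀ p q, 0 ≤ X p q) (hY : ∀ p q, 0 ≤ Y p q)
    (hXX : ∀ p q, X p q ≤ X' p q) (hYY : ∀ p q, Y p q ≤ Y' p q) :
    ∀ p q, (X * Y) p q ≤ (X' * Y') p q := by
  intro p q
  rw [Matrix.mul_apply, Matrix.mul_apply]
  exact Finset.sum_le_sum fun r _ =>
    mul_le_mul (hXX p r) (hYY r q) (hY r q) ((hX p r).trans (hXX p r))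

lemma mulVecMono {X : Matrix (Fin n) (Fin n) ℝ} (hX : ∀ p q, 0 ≤ X p q)
    {u v : Fin n → ℝ} (huv : ∀ q, u q ≤ v q) : ∀ p, (X *ᵥ u) p ≤ (X *ᵥ v) p := by
  intro p
  rw [Matrix.mulVec, Matrix.mulVec, dotProduct, dotProduct]
  exact Finset.sum_le_sum fun r _ => mul_le_mul_of_nonneg_left (huv r) (hX p r)

/-- Comparison: if `0 ≤ T ≤ S` entrywise and `1 - S` has a nonnegative inverse,
then so does `1 - T`. -/
lemma invFact {S T : Matrix (Fin n) (Fin n) ℝ}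
    (hT0 : ∀ p q, 0 ≤ T p q) (hTS : ∀ p q, T p q ≤ S p q)
    (hU : IsUnit (1 - S).det) (hInv : ∀ p q, 0 ≤ (1 - S)⁻¹ p q) :
    IsUnit (1 - T).det ∧ ∀ p q, 0 ≤ (1 - T)⁻¹ p q := by
  have hS0 : ∀ p q, 0 ≤ S p q := fun p q => (hT0 p q).trans (hTS p q)
  have hTk : ∀ k, ∀ p q, 0 ≤ (T ^ k) p q := matPowNonneg hT0
  have hSk : ∀ k, ∀ p q, 0 ≤ (S ^ k) p q := matPowNonneg hS0
  have hTSk : ∀ k, ∀ p q, (T ^ k) p q ≤ (S ^ k) p q := by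
    intro k
    induction k with
    | zero => intro p q; simp
    | succ k ih =>
        rw [pow_succ, pow_succ]
        exact matMulLe (hTk k) hT0 ih hTS
  set L : Matrix (Fin n) (Fin n) ℝ := (1 - S)⁻¹ with hL
  have hLleft : L * (1 - S) = 1 := Matrix.nonsing_inv_mul _ hU
  have hLright : (1 - S) * L = 1 := Matrix.mul_nonsing_inv _ hU
  set Q : ℕ → Matrix (Fin n) (Fin n) ℝ := fun K => ∑ k ∈ Finset.range K, T ^ k with hQ
  have hQgeom : ∀ K, Q K * (1 - T) = 1 - T ^ K := by
    intro K
    have h2 : Q K * (T - 1) = T ^ K - 1 := geom_sum_mul T K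
    have h3 : Q K * (1 - T) = -(Q K * (T - 1)) := by
      rw [← Matrix.mul_neg, neg_sub]
    rw [h3, h2, neg_sub]
  have hSgeom : ∀ K, (∑ k ∈ Finset.range K, S ^ k) * (1 - S) = 1 - S ^ K := by
    intro K
    have h2 : (∑ k ∈ Finset.range K, S ^ k) * (S - 1) = S ^ K - 1 := geom_sum_mul S K
    have h3 : (∑ k ∈ Finset.range K, S ^ k) * (1 - S) = -((∑ k ∈ Finset.range K, S ^ k) * (S - 1)) := by
      rw [← Matrix.mul_neg, neg_sub]
    rw [h3, h2, neg_sub]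
  have hSbound : ∀ K p q, (∑ k ∈ Finset.range K, S ^ k) p q ≤ L p q := by
    intro K p q
    have h1 : (∑ k ∈ Finset.range K, S ^ k) = (1 - S ^ K) * L := by
      calc (∑ k ∈ Finset.range K, S ^ k)
          = (∑ k ∈ Finset.range K, S ^ k) * ((1 - S) * L) := by rw [hLright, Matrix.mul_one]
        _ = ((∑ k ∈ Finset.range K, S ^ k) * (1 - S)) * L := by rw [Matrix.mul_assoc]
        _ = (1 - S ^ K) * L := by rw [hSgeom]
    have h2 : L - (∑ k ∈ Finset.range K, S ^ k) = S ^ K * L := by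
      rw [h1]; rw [Matrix.sub_mul, Matrix.one_mul]; abel
    have h3 : 0 ≤ (S ^ K * L) p q := matMulNonneg (hSk K) hInv p q
    have h4 : (L - ∑ k ∈ Finset.range K, S ^ k) p q = L p q - (∑ k ∈ Finset.range K, S ^ k) p q := by
      simp [Matrix.sub_apply]
    linarith [h2 ▸ h3, h4 ▸ (h2 ▸ h3)]
  have hQentry : ∀ K p q, Q K p q = ∑ k ∈ Finset.range K, (T ^ k) p q := by
    intro K p q
    simp [hQ, Matrix.sum_apply]
  have hQbound : ∀ K p q, Q K p q ≤ L p q := by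
    intro K p q
    refine le_trans ?_ (hSbound K p q)
    rw [hQentry]
    rw [show (∑ k ∈ Finset.range K, S ^ k) p q = ∑ k ∈ Finset.range K, (S ^ k) p q by
      simp [Matrix.sum_apply]]
    exact Finset.sum_le_sum fun k _ => hTSk k p q
  have hQmono : ∀ p q, Monotone fun K => Q K p q := by
    intro p q
    intro a b hab
    show Q a p q ≤ Q b p q
    rw [hQentry, hQentry]
    exact Finset.sum_le_sum_of_subset_of_nonneg (Finset.range_subset_range.2 hab)
      (fun k _ _ => hTk k p q)
  set Lm : Matrix (Fin n) (Fin n) ℝ := Matrix.of fun p q => ⨆ K, Q K p q with hLm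
  have hbdd : ∀ p q, BddAbove (Set.range fun K => Q K p q) := by
    intro p q
    exact ⟨L p q, by rintro x ⟨K, rfl⟩; exact hQbound K p q⟩
  have hQtend : ∀ p q, Tendsto (fun K => Q K p q) atTop (nhds (Lm p q)) := by
    intro p q
    exact tendsto_atTop_ciSup (hQmono p q) (hbdd p q)
  have hLm0 : ∀ p q, 0 ≤ Lm p q := by
    intro p q
    refine le_trans ?_ (le_ciSup (hbdd p q) 0)
    simp [hQentry]
  have hTpowtend : ∀ p q, Tendsto (fun K => (T ^ K) p q) atTop (nhds 0) := by
    intro p q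
    have h1 : Tendsto (fun K => Q (K + 1) p q - Q K p q) atTop (nhds (Lm p q - Lm p q)) :=
      ((hQtend p q).comp (tendsto_add_atTop_nat 1)).sub (hQtend p q)
    have h2 : (fun K => Q (K + 1) p q - Q K p q) = fun K => (T ^ K) p q := by
      funext K
      rw [hQentry, hQentry, Finset.sum_range_succ]
      ring
    rw [h2] at h1
    simpa using h1
  have hleft : Lm * (1 - T) = 1 := by
    ext p q
    have h1 : Tendsto (fun K => (Q K * (1 - T)) p q) atTop (nhds ((Lm * (1 - T)) p q)) := by
      simp only [Matrix.mul_apply]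
      exact tendsto_finset_sum _ fun r _ => (hQtend p r).mul_const _
    have h2 : Tendsto (fun K => (Q K * (1 - T)) p q) atTop (nhds ((1 : Matrix (Fin n) (Fin n) ℝ) p q)) := by
      have h3 : ∀ K, (Q K * (1 - T)) p q = (1 : Matrix (Fin n) (Fin n) ℝ) p q - (T ^ K) p q := by
        intro K; rw [hQgeom]; simp [Matrix.sub_apply]
      simp only [h3]
      simpa using (tendsto_const_nhds.sub (hTpowtend p q))
    exact tendsto_nhds_unique h1 h2
  have hdet : IsUnit (1 - T).det := by
    have h5 : Lm.det * (1 - T).det = 1 := by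
      rw [← Matrix.det_mul, hleft, Matrix.det_one]
    exact IsUnit.of_mul_eq_one _ (by rw [mul_comm]; exact h5)
  refine ⟨hdet, ?_⟩
  have h6 : (1 - T)⁻¹ = Lm := Matrix.inv_eq_left_inv hleft
  rw [h6]
  exact hLm0

lemma offT_nonneg {X : Matrix (Fin n) (Fin n) ℝ} (hd : ∀ p, 0 < X p p) :
    ∀ p q, 0 ≤ offT X p q := by
  intro p q
  simp only [offT, Matrix.of_apply]
  split
  · exact le_refl 0
  · exact div_nonneg (abs_nonneg _) (hd p).le

lemma cmp_decomp {X : Matrix (Fin n) (Fin n) ℝ} (hd : ∀ p, 0 < X p p) :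
    cmpMat X = Matrix.diagonal (fun p => X p p) * (1 - offT X) := by
  ext p q
  rw [Matrix.diagonal_mul]
  simp only [cmpMat, offT, Matrix.of_apply, Matrix.sub_apply, Matrix.one_apply]
  by_cases h : p = q
  · subst h
    simp [abs_of_pos (hd p)]
  · simp only [if_neg h]
    field_simp [ne_of_gt (hd p)]
    ring

lemma sub_offT_fact {X : Matrix (Fin n) (Fin n) ℝ} (hd : ∀ p, 0 < X p p)
    (hdet : IsUnit (cmpMat X).det) (hinv : ∀ p q, 0 ≤ (cmpMat X)⁻¹ p q) :
    IsUnit (1 - offT X).det ∧ ∀ p q, 0 ≤ (1 - offT X)⁻¹ p q := by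
  have hdec := cmp_decomp hd
  have hdet2 : IsUnit ((Matrix.diagonal fun p => X p p).det * (1 - offT X).det) := by
    rw [← Matrix.det_mul, ← hdec]; exact hdet
  have hu : IsUnit (1 - offT X).det := (IsUnit.mul_iff.mp hdet2).2
  refine ⟨hu, ?_⟩
  have hleft : ((cmpMat X)⁻¹ * Matrix.diagonal fun p => X p p) * (1 - offT X) = 1 := by
    rw [Matrix.mul_assoc, ← hdec, Matrix.nonsing_inv_mul _ hdet]
  rw [Matrix.inv_eq_left_inv hleft]
  intro p q
  rw [Matrix.mul_diagonal]
  exact mul_nonneg (hinv p q) (hd q).le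

lemma cmp_inv_fact {X : Matrix (Fin n) (Fin n) ℝ} (hd : ∀ p, 0 < X p p)
    (hu : IsUnit (1 - offT X).det) (huinv : ∀ p q, 0 ≤ (1 - offT X)⁻¹ p q) :
    IsUnit (cmpMat X).det ∧ ∀ p q, 0 ≤ (cmpMat X)⁻¹ p q := by
  have hdec := cmp_decomp hd
  have hDdet : IsUnit (Matrix.diagonal fun p => X p p).det := by
    rw [Matrix.det_diagonal]
    exact (Finset.prod_pos fun p _ => hd p).ne'.isUnit
  have hdet : IsUnit (cmpMat X).det := by
    rw [hdec, Matrix.det_mul]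
    exact hDdet.mul hu
  refine ⟨hdet, ?_⟩
  have hDD : (Matrix.diagonal fun p => (X p p)⁻¹) * (Matrix.diagonal fun p => X p p) = 1 := by
    rw [Matrix.diagonal_mul_diagonal]
    have h1 : (fun p => (X p p)⁻¹ * X p p) = fun _ => (1:ℝ) := by
      funext p; exact inv_mul_cancel₀ (hd p).ne'
    rw [h1, Matrix.diagonal_one]
  have hleft : ((1 - offT X)⁻¹ * Matrix.diagonal fun p => (X p p)⁻¹) * cmpMat X = 1 := by
    rw [hdec, Matrix.mul_assoc, ← Matrix.mul_assoc (Matrix.diagonal fun p => (X p p)⁻¹), hDD,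
      Matrix.one_mul, Matrix.nonsing_inv_mul _ hu]
  rw [Matrix.inv_eq_left_inv hleft]
  intro p q
  rw [Matrix.mul_diagonal]
  exact mul_nonneg (huinv p q) (inv_nonneg.mpr (hd q).le)

lemma jacobi_eq {A : Matrix (Fin n) (Fin n) ℝ} (hd : ∀ p, 0 < A p p) :
    (Matrix.diagonal fun p => A p p)⁻¹ * (Matrix.diagonal (fun p => A p p) - A) =
      Matrix.of fun p q => if p = q then 0 else -(A p q) / A p p := by
  have hinv : (Matrix.diagonal fun p => A p p)⁻¹ = Matrix.diagonal fun p => (A p p)⁻¹ := by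
    refine Matrix.inv_eq_left_inv ?_
    rw [Matrix.diagonal_mul_diagonal]
    have h1 : (fun p => (A p p)⁻¹ * A p p) = fun _ => (1:ℝ) := by
      funext p; exact inv_mul_cancel₀ (hd p).ne'
    rw [h1, Matrix.diagonal_one]
  rw [hinv]
  ext p q
  rw [Matrix.diagonal_mul, Matrix.sub_apply, Matrix.diagonal_apply]
  by_cases h : p = q
  · subst h; simp
  · simp only [if_neg h, Matrix.of_apply, if_neg h]
    ring

lemma abs_jacobi_eq_offT {A : Matrix (Fin n) (Fin n) ℝ} (hd : ∀ p, 0 < A p p) (p q : Fin n) :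
    |(Matrix.of fun p q => if p = q then 0 else -(A p q) / A p p : Matrix (Fin n) (Fin n) ℝ) p q|
      = offT A p q := by
  simp only [Matrix.of_apply, offT]
  by_cases h : p = q
  · simp [h]
  · simp only [if_neg h]
    rw [abs_div, abs_neg, abs_of_pos (hd p)]

lemma specRad_facts {A : Matrix (Fin n) (Fin n) ℝ} (hd : ∀ p, 0 < A p p)
    (hu : IsUnit (1 - offT A).det) (huinv : ∀ p q, 0 ≤ (1 - offT A)⁻¹ p q) :
    0 ≤ specRad ((Matrix.diagonal fun p => A p p)⁻¹ * (Matrix.diagonal (fun p => A p p) - A)) ∧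
    specRad ((Matrix.diagonal fun p => A p p)⁻¹ * (Matrix.diagonal (fun p => A p p) - A)) < 1 := by
  set C : Matrix (Fin n) (Fin n) ℝ :=
    (Matrix.diagonal fun p => A p p)⁻¹ * (Matrix.diagonal (fun p => A p p) - A) with hC
  have hCeq : C = Matrix.of fun p q => if p = q then 0 else -(A p q) / A p p := jacobi_eq hd
  set Cc := C.map Complex.ofReal with hCc
  have hev : ∀ μ : ℂ, μ ∈ spectrum ℂ Cc → ‖μ‖ < 1 := by
    intro μ hμ
    by_contra hge
    push_neg at hge
    have hnu : ¬IsUnit (algebraMap ℂ (Matrix (Fin n) (Fin n) ℂ) μ - Cc) := spectrum.mem_iff.mp hμ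
    have hdet0 : (algebraMap ℂ (Matrix (Fin n) (Fin n) ℂ) μ - Cc).det = 0 := by
      by_contra hne
      exact hnu ((Matrix.isUnit_iff_isUnit_det _).mpr (isUnit_iff_ne_zero.mpr hne))
    obtain ⟨v, hv0, hveq⟩ := (Matrix.exists_mulVec_eq_zero_iff).mpr hdet0
    have halg : algebraMap ℂ (Matrix (Fin n) (Fin n) ℂ) μ = μ • (1 : Matrix (Fin n) (Fin n) ℂ) :=
      Algebra.algebraMap_eq_smul_one μ
    have hCv : Cc *ᵥ v = μ • v := by
      have h1 : (algebraMap ℂ (Matrix (Fin n) (Fin n) ℂ) μ - Cc) *ᵥ v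
          = μ • v - Cc *ᵥ v := by
        rw [Matrix.sub_mulVec, halg, Matrix.smul_mulVec, Matrix.one_mulVec]
      rw [h1] at hveq
      linear_combination (norm := module) -hveq
    set w : Fin n → ℝ := fun p => ‖v p‖ with hw
    have hw0 : ∀ p, 0 ≤ w p := fun p => norm_nonneg _
    have hbound : ∀ p, ‖μ‖ * w p ≤ (offT A *ᵥ w) p := by
      intro p
      have h1 : ‖μ‖ * w p = ‖(Cc *ᵥ v) p‖ := by
        rw [hCv]; simp [hw, _root_.map_mul]
      rw [h1]
      have h2 : (Cc *ᵥ v) p = ∑ q, (Complex.ofReal (C p q)) * v q := by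
        simp [Matrix.mulVec, dotProduct, hCc, Matrix.map_apply]
      rw [h2]
      refine le_trans (norm_sum_le _ _) ?_
      rw [Matrix.mulVec, dotProduct]
      refine le_of_eq (Finset.sum_congr rfl fun q _ => ?_)
      rw [norm_mul, Complex.norm_real, Real.norm_eq_abs]
      rw [show |C p q| = offT A p q by rw [hCeq]; exact abs_jacobi_eq_offT hd p q]
    have hwle : ∀ p, ((1 - offT A) *ᵥ w) p ≤ 0 := by
      intro p
      have h1 : ((1 - offT A) *ᵥ w) p = w p - (offT A *ᵥ w) p := by
        rw [Matrix.sub_mulVec, Matrix.one_mulVec]; rfl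
      rw [h1]
      have h2 : w p ≤ ‖μ‖ * w p := le_mul_of_one_le_left (hw0 p) hge
      linarith [hbound p]
    have hwzero : ∀ p, w p ≤ 0 := by
      intro p
      have h1 : w p = ((1 - offT A)⁻¹ *ᵥ ((1 - offT A) *ᵥ w)) p := by
        rw [Matrix.mulVec_mulVec, Matrix.nonsing_inv_mul _ hu, Matrix.one_mulVec]
      rw [h1, Matrix.mulVec, dotProduct]
      refine Finset.sum_nonpos fun q _ => mul_nonpos_of_nonneg_of_nonpos (huinv p q) (hwle q)
    have hv : v = 0 := by
      funext p
      have h0 : w p = 0 := le_antisymm (hwzero p) (hw0 p)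
      have h1 : ‖v p‖ = 0 := h0
      simpa using h1
    exact hv0 hv
  set R : Set ℝ := {r : ℝ | ∃ μ : ℂ, μ ∈ spectrum ℂ (C.map Complex.ofReal) ∧ r = ‖μ‖}
    with hR
  have hRim : R = (fun μ : ℂ => ‖μ‖) '' (spectrum ℂ Cc) := by
    ext r
    constructor
    · rintro ⟨μ, hμ, rfl⟩; exact ⟨μ, hμ, rfl⟩
    · rintro ⟨μ, hμ, rfl⟩; exact ⟨μ, hμ, rfl⟩
  have hfin : R.Finite := by
    rw [hRim]; exact (Matrix.finite_spectrum Cc).image _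
  rcases Set.eq_empty_or_nonempty R with hemp | hne
  · constructor
    · rw [show specRad C = sSup R from rfl, hemp, Real.sSup_empty]
    · rw [show specRad C = sSup R from rfl, hemp, Real.sSup_empty]; norm_num
  · have hmem : sSup R ∈ R := Set.Nonempty.csSup_mem hne hfin
    obtain ⟨μ, hμ, heq⟩ := hmem
    constructor
    · show 0 ≤ sSup R
      rw [heq]; exact norm_nonneg _
    · show sSup R < 1
      rw [heq]; exact hev μ hμ

lemma lcp_comp {M : Matrix (Fin n) (Fin n) ℝ} {g x : Fin n → ℝ}
    (h : SolvesLCP M g x) : ∀ j, x j * ((M *ᵥ x) j - g j) = 0 := by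
  obtain ⟨h1, h2, h3⟩ := h
  have h4 := (Finset.sum_eq_zero_iff_of_nonneg (fun j _ =>
    mul_nonneg (h1 j) (sub_nonneg.mpr (h2 j)))).mp h3
  exact fun j => h4 j (Finset.mem_univ j)

lemma lcp_diff {M : Matrix (Fin n) (Fin n) ℝ} (hdiag : ∀ p, 0 < M p p)
    {g h : Fin n → ℝ} {y z : Fin n → ℝ}
    (hy : SolvesLCP M g y) (hz : SolvesLCP M h z) :
    ∀ p, (cmpMat M *ᵥ fun r => |y r - z r|) p ≤ |g p - h p| := by
  intro p
  set e : Fin n → ℝ := fun r => |y r - z r| with he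
  have he0 : ∀ r, 0 ≤ e r := fun r => abs_nonneg _
  have hkey : (y p - z p) * ((M *ᵥ y) p - (M *ᵥ z) p) ≤ (y p - z p) * (g p - h p) := by
    have c1 : y p * ((M *ᵥ y) p - g p) = 0 := lcp_comp hy p
    have c2 : z p * ((M *ᵥ z) p - h p) = 0 := lcp_comp hz p
    have n1 : 0 ≤ y p * ((M *ᵥ z) p - h p) := mul_nonneg (hy.1 p) (sub_nonneg.mpr (hz.2.1 p))
    have n2 : 0 ≤ z p * ((M *ᵥ y) p - g p) := mul_nonneg (hz.1 p) (sub_nonneg.mpr (hy.2.1 p))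
    nlinarith [c1, c2, n1, n2]
  have hsplit : (cmpMat M *ᵥ e) p = M p p * e p - ∑ r ∈ Finset.univ.erase p, |M p r| * e r := by
    rw [Matrix.mulVec, dotProduct]
    rw [← Finset.add_sum_erase _ _ (Finset.mem_univ p)]
    have h1 : cmpMat M p p = M p p := by
      simp [cmpMat, abs_of_pos (hdiag p)]
    have h2 : ∀ r ∈ Finset.univ.erase p, cmpMat M p r * e r = -(|M p r| * e r) := by
      intro r hr
      have : p ≠ r := (Finset.ne_of_mem_erase hr).symm
      simp [cmpMat, this, neg_mul]
    rw [h1, Finset.sum_congr rfl h2, Finset.sum_neg_distrib]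
    ring
  rw [hsplit]
  by_cases hep : e p = 0
  · rw [hep]
    have h3 : 0 ≤ ∑ r ∈ Finset.univ.erase p, |M p r| * e r :=
      Finset.sum_nonneg fun r _ => mul_nonneg (abs_nonneg _) (he0 r)
    have h4 := abs_nonneg (g p - h p)
    linarith
  · have hepos : 0 < e p := lt_of_le_of_ne (he0 p) (Ne.symm hep)
    set a : ℝ := y p - z p with ha
    have haa : |a| = e p := rfl
    have hexp : (M *ᵥ y) p - (M *ᵥ z) p
        = M p p * a + ∑ r ∈ Finset.univ.erase p, M p r * (y r - z r) := by
      rw [Matrix.mulVec, Matrix.mulVec, dotProduct, dotProduct,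
        ← Finset.sum_sub_distrib, ← Finset.add_sum_erase _ _ (Finset.mem_univ p)]
      congr 1
      · ring
      · exact Finset.sum_congr rfl fun r _ => by ring
    have hsum : -(e p * ∑ r ∈ Finset.univ.erase p, |M p r| * e r)
        ≤ a * ∑ r ∈ Finset.univ.erase p, M p r * (y r - z r) := by
      rw [Finset.mul_sum, Finset.mul_sum, ← Finset.sum_neg_distrib]
      refine Finset.sum_le_sum fun r _ => ?_
      have habs : |a * (M p r * (y r - z r))| = e p * (|M p r| * e r) := by
        rw [abs_mul, abs_mul, haa]
      calc -(e p * (|M p r| * e r)) = -|a * (M p r * (y r - z r))| := by rw [habs]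
        _ ≤ a * (M p r * (y r - z r)) := neg_abs_le _
    have hq : a * (g p - h p) ≤ e p * |g p - h p| := by
      calc a * (g p - h p) ≤ |a * (g p - h p)| := le_abs_self _
        _ = e p * |g p - h p| := by rw [abs_mul, haa]
    have haa2 : a * a = e p * e p := by rw [← haa, abs_mul_abs_self]
    have h5 : M p p * (e p * e p) + a * ∑ r ∈ Finset.univ.erase p, M p r * (y r - z r)
        ≤ e p * |g p - h p| := by
      have h6 : a * ((M *ᵥ y) p - (M *ᵥ z) p)
          = M p p * (a * a) + a * ∑ r ∈ Finset.univ.erase p, M p r * (y r - z r) := by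
        rw [hexp]; ring
      rw [haa2] at h6
      linarith [hkey, hq, h6]
    have h7 : e p * (M p p * e p - ∑ r ∈ Finset.univ.erase p, |M p r| * e r)
        ≤ e p * |g p - h p| := by
      nlinarith [h5, hsum]
    have h8 := le_of_mul_le_mul_left h7 hepos
    linarith

end Aux

/-- Theorem 3.1: convergence of the asynchronous relaxed nonstationary
multisplitting method for LCP with an H₊-matrix. -/
theorem async_relaxed_nonstationary_multisplitting_converges {n m : ℕ}
    (A : Matrix (Fin n) (Fin n) ℝ) (f xstar x0 : Fin n → ℝ)
    (hA : IsHpMat A)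
    (θ : ℝ)
    (hθ : θ = specRad ((Matrix.diagonal fun p => A p p)⁻¹ *
      (Matrix.diagonal (fun p => A p p) - A)))
    (ω : ℝ) (hω : 0 < ω ∧ ω < 2 / (1 + θ))
    (M N : Fin m → Matrix (Fin n) (Fin n) ℝ)
    (hsplit : ∀ i, A = M i - N i)
    (hcmp : ∀ i, ∀ p q, cmpMat A p q ≤ cmpMat (M i) p q - absMat (N i) p q)
    (hxstar : SolvesLCP A f xstar)
    (J : ℕ → Finset (Fin m)) (hJ : ∀ k, (J k).Nonempty)
    (s : Fin m → ℕ → ℕ)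
    (hs1 : ∀ i k, s i k ≤ k)
    (hs2 : ∀ i, Filter.Tendsto (s i) Filter.atTop Filter.atTop)
    (hs3 : ∀ i, ∀ K : ℕ, ∃ k, K ≤ k ∧ i ∈ J k)
    (E : Fin m → Matrix (Fin n) (Fin n) ℝ)
    (hEdiag : ∀ i p q, p ≠ q → E i p q = 0)
    (hEnn : ∀ i p, 0 ≤ E i p p)
    (hEsum : ∑ i, E i = 1)
    (η : ℝ) (hη : η = θ / ∑ i, infNorm (E i))
    (qt : ℕ) (hqt : 0 < qt)
    (hnorm : ∀ i, ∀ q, qt ≤ q →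
      infNorm (((cmpMat (M i))⁻¹ * absMat (N i)) ^ q) ≤ η)
    (q : Fin m → ℕ → ℕ) (hq : ∀ i k, qt ≤ q i k)
    (Ek : ℕ → Fin m → Fin m → Matrix (Fin n) (Fin n) ℝ)
    (hEkdiag : ∀ k i l, ∀ p r, p ≠ r → Ek k i l p r = 0)
    (hEknn : ∀ k i l p, 0 ≤ Ek k i l p p)
    (hEksum : ∀ k l, l ∈ J k → ∑ i, Ek k i l = 1)
    (x : ℕ → Fin m → Fin n → ℝ) (hx0 : ∀ l, x 0 l = x0)
    (y : ℕ → Fin m → ℕ → Fin n → ℝ)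
    (hy0 : ∀ k i, y k i 0 = x (s i k) i)
    (hy : ∀ k i v, 1 ≤ v → v ≤ q i k →
      SolvesLCP (M i) (fun p => f p + (N i *ᵥ y k i (v - 1)) p) (y k i v))
    (hxn : ∀ k l, l ∉ J k → x (k + 1) l = x k l)
    (hxj : ∀ k l, l ∈ J k →
      x (k + 1) l = ω • (∑ i, Ek k i l *ᵥ y k i (q i k)) + (1 - ω) • x k l) :
    ∀ l, Filter.Tendsto (fun k => x k l) Filter.atTop (nhds xstar) := by
  -- trivial case `n = 0`
  rcases Nat.eq_zero_or_pos n with hn0 | hn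
  · subst hn0
    intro l
    have hxx : ∀ k, x k l = xstar := fun k => funext fun p => p.elim0
    simp only [hxx]
    exact tendsto_const_nhds
  -- main case
  have hp0 : Fin n := ⟨0, hn⟩
  obtain ⟨hAH, hdiagA⟩ := hA
  obtain ⟨_, hdetA, hinvA⟩ := hAH
  have hAfact := sub_offT_fact hdiagA hdetA hinvA
  have hθfacts := specRad_facts hdiagA hAfact.1 hAfact.2
  have hθ0 : 0 ≤ θ := hθ ▸ hθfacts.1
  have hθ1 : θ < 1 := hθ ▸ hθfacts.2
  -- diagonal entries of the M i are positive
  have hMd : ∀ i p, 0 < M i p p := by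
    intro i p
    have h1 : A p p = M i p p - N i p p := by
      have := congrFun (congrFun (hsplit i) p) p
      simpa [Matrix.sub_apply] using this
    have h2 : A p p ≤ |M i p p| - |N i p p| := by
      have := hcmp i p p
      simpa [cmpMat, absMat, abs_of_pos (hdiagA p)] using this
    by_contra hle
    push_neg at hle
    rw [abs_of_nonpos hle] at h2
    have h3 : -(N i p p) ≤ |N i p p| := neg_le_abs _
    have := hdiagA p
    linarith
  -- basic entrywise facts from hcmp
  have hcd : ∀ i p, A p p ≤ M i p p := by
    intro i p
    have h2 : A p p ≤ |M i p p| - |N i p p| := by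
      have := hcmp i p p
      simpa [cmpMat, absMat, abs_of_pos (hdiagA p)] using this
    rw [abs_of_pos (hMd i p)] at h2
    have := abs_nonneg (N i p p)
    linarith
  have hco : ∀ i p pq, p ≠ pq → |M i p pq| ≤ |A p pq| := by
    intro i p pq hne
    have h2 := hcmp i p pq
    simp only [cmpMat, absMat, Matrix.of_apply, if_neg hne] at h2
    have := abs_nonneg (N i p pq)
    linarith
  have hTle : ∀ i p pq, offT (M i) p pq ≤ offT A p pq := by
    intro i p pq
    by_cases h : p = pq
    · simp [offT, h]
    · simp only [offT, Matrix.of_apply, if_neg h]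
      exact div_le_div₀ (abs_nonneg _) (hco i p pq h) (hdiagA p) (hcd i p)
  have hMfact : ∀ i, IsUnit (cmpMat (M i)).det ∧ ∀ p pq, 0 ≤ (cmpMat (M i))⁻¹ p pq := by
    intro i
    have h1 := invFact (offT_nonneg (hMd i)) (hTle i) hAfact.1 hAfact.2
    exact cmp_inv_fact (hMd i) h1.1 h1.2
  -- η ≤ θ
  have hηθ : η ≤ θ := by
    have hbddE : ∀ i : Fin m, BddAbove (Set.range fun p : Fin n => ∑ pq, |E i p pq|) :=
      fun i => Set.Finite.bddAbove (Set.finite_range _)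
    have hEin : ∀ i : Fin m, E i hp0 hp0 ≤ infNorm (E i) := by
      intro i
      have h1 : E i hp0 hp0 ≤ ∑ pq, |E i hp0 pq| := by
        have h2 : E i hp0 hp0 ≤ |E i hp0 hp0| := le_abs_self _
        refine h2.trans (Finset.single_le_sum (f := fun pq => |E i hp0 pq|) (fun pq _ => abs_nonneg _) (Finset.mem_univ hp0))
      exact h1.trans (le_ciSup (hbddE i) hp0)
    have hsum1 : (1:ℝ) ≤ ∑ i, infNorm (E i) := by
      have h1 : (∑ i, E i) hp0 hp0 = 1 := by
        rw [hEsum, Matrix.one_apply_eq]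
      have h2 : (∑ i, E i) hp0 hp0 = ∑ i, E i hp0 hp0 := by
        simp [Matrix.sum_apply]
      rw [h2] at h1
      rw [← h1]
      exact Finset.sum_le_sum fun i _ => hEin i
    rw [hη]
    exact div_le_self hθ0 hsum1
  -- the contraction factor
  obtain ⟨hω0, hω2⟩ := hω
  have h1θ : (0:ℝ) < 1 + θ := by linarith
  have hω2' : ω * (1 + θ) < 2 := by
    rw [lt_div_iff₀ h1θ] at hω2
    exact hω2
  set γ : ℝ := ω * θ + |1 - ω| with hγdef
  have hγ0 : 0 ≤ γ := add_nonneg (mul_nonneg hω0.le hθ0) (abs_nonneg _)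
  have hγ1 : γ < 1 := by
    rcases le_or_gt ω 1 with hω1 | hω1
    · rw [hγdef, abs_of_nonneg (by linarith : (0:ℝ) ≤ 1 - ω)]
      nlinarith
    · rw [hγdef, abs_of_nonpos (by linarith : 1 - ω ≤ (0:ℝ))]
      nlinarith
  -- x* solves the LCP for each M i
  have hMAi : ∀ i, M i = A + N i := by
    intro i
    rw [hsplit i]
    abel
  have hxstarM : ∀ i, SolvesLCP (M i) (fun p => f p + (N i *ᵥ xstar) p) xstar := by
    intro i
    obtain ⟨hx1, hx2, hx3⟩ := hxstar
    have hMv : ∀ p, (M i *ᵥ xstar) p = (A *ᵥ xstar) p + (N i *ᵥ xstar) p := by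
      intro p
      rw [hMAi i, Matrix.add_mulVec]
      rfl
    refine ⟨hx1, fun p => by show f p + (N i *ᵥ xstar) p ≤ (M i *ᵥ xstar) p
                             rw [hMv p]; linarith [hx2 p], ?_⟩
    rw [← hx3]
    refine Finset.sum_congr rfl fun p _ => ?_
    rw [hMv p]
    ring
  -- key contraction estimate for the inner iterations
  set P : Fin m → Matrix (Fin n) (Fin n) ℝ := fun i => (cmpMat (M i))⁻¹ * absMat (N i) with hP
  have hPnn : ∀ i p pq, 0 ≤ P i p pq :=
    fun i => matMulNonneg (hMfact i).2 (fun p pq => abs_nonneg _)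
  have key : ∀ k i (b : ℝ), 0 ≤ b → (∀ p, |x (s i k) i p - xstar p| ≤ b) →
      ∀ p, |y k i (q i k) p - xstar p| ≤ θ * b := by
    intro k i b hb hxb
    set e0 : Fin n → ℝ := fun p => |x (s i k) i p - xstar p| with he0
    have claim : ∀ v, v ≤ q i k → ∀ p, |y k i v p - xstar p| ≤ ((P i ^ v) *ᵥ e0) p := by
      intro v
      induction v with
      | zero =>
          intro _ p
          rw [hy0 k i, pow_zero, Matrix.one_mulVec]
      | succ v ih =>
          intro hvq p
          have hih := ih (le_trans (Nat.le_succ v) hvq)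
          have hlcp := hy k i (v + 1) (Nat.le_add_left 1 v) hvq
          simp only [Nat.add_sub_cancel] at hlcp
          have hdiff := lcp_diff (hMd i) hlcp (hxstarM i)
          set ev : Fin n → ℝ := fun r => |y k i v r - xstar r| with hev
          set e1 : Fin n → ℝ := fun r => |y k i (v+1) r - xstar r| with he1
          have hrhs : ∀ p2, |(f p2 + (N i *ᵥ y k i v) p2) -
              (f p2 + (N i *ᵥ xstar) p2)| ≤ (absMat (N i) *ᵥ ev) p2 := by
            intro p2
            have h2 : (N i *ᵥ y k i v) p2 - (N i *ᵥ xstar) p2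
                = ∑ r, N i p2 r * (y k i v r - xstar r) := by
              rw [Matrix.mulVec, Matrix.mulVec, dotProduct, dotProduct,
                ← Finset.sum_sub_distrib]
              exact Finset.sum_congr rfl fun r _ => by ring
            have h1 : (f p2 + (N i *ᵥ y k i v) p2) - (f p2 + (N i *ᵥ xstar) p2)
                = ∑ r, N i p2 r * (y k i v r - xstar r) := by
              rw [← h2]; ring
            rw [h1]
            refine le_trans (Finset.abs_sum_le_sum_abs _ _) ?_
            rw [Matrix.mulVec, dotProduct]
            refine le_of_eq (Finset.sum_congr rfl fun r _ => ?_)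
            rw [abs_mul]
            rfl
          have hcm : ∀ p2, (cmpMat (M i) *ᵥ e1) p2 ≤ (absMat (N i) *ᵥ ev) p2 :=
            fun p2 => le_trans (hdiff p2) (hrhs p2)
          have hstep : e1 p ≤ (P i *ᵥ ev) p := by
            have h1 : e1 p = ((cmpMat (M i))⁻¹ *ᵥ (cmpMat (M i) *ᵥ e1)) p := by
              rw [Matrix.mulVec_mulVec, Matrix.nonsing_inv_mul _ (hMfact i).1,
                Matrix.one_mulVec]
            rw [h1, hP]
            rw [← Matrix.mulVec_mulVec]
            exact mulVecMono (hMfact i).2 hcm p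
          refine hstep.trans ?_
          have h2 : (P i *ᵥ ev) p ≤ (P i *ᵥ ((P i ^ v) *ᵥ e0)) p :=
            mulVecMono (hPnn i) hih p
          refine h2.trans (le_of_eq ?_)
          rw [Matrix.mulVec_mulVec, ← pow_succ']
    have hfin : ∀ p, |y k i (q i k) p - xstar p| ≤ ((P i ^ q i k) *ᵥ e0) p :=
      claim (q i k) le_rfl
    intro p
    refine (hfin p).trans ?_
    have hpow0 : ∀ p2 r, 0 ≤ (P i ^ q i k) p2 r := matPowNonneg (hPnn i) (q i k)
    have h1 : ((P i ^ q i k) *ᵥ e0) p ≤ ((P i ^ q i k) *ᵥ (fun _ => b)) p :=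
      mulVecMono hpow0 hxb p
    refine h1.trans ?_
    have h2 : ((P i ^ q i k) *ᵥ (fun _ => b)) p = (∑ r, (P i ^ q i k) p r) * b := by
      rw [Matrix.mulVec, dotProduct, Finset.sum_mul]
    rw [h2]
    have h3 : ∑ r, (P i ^ q i k) p r ≤ θ := by
      have h4 : ∑ r, (P i ^ q i k) p r = ∑ r, |(P i ^ q i k) p r| :=
        Finset.sum_congr rfl fun r _ => (abs_of_nonneg (hpow0 p r)).symm
      have h5 : ∑ r, |(P i ^ q i k) p r| ≤ infNorm (P i ^ q i k) :=
        le_ciSup (f := fun p2 => ∑ r, |(P i ^ q i k) p2 r|)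
          (Set.Finite.bddAbove (Set.finite_range _)) p
      have h6 := hnorm i (q i k) (hq i k)
      rw [h4]
      exact h5.trans (h6.trans hηθ)
    exact mul_le_mul_of_nonneg_right h3 hb
  -- one-step recurrence on an updated component
  have hrec : ∀ k l, l ∈ J k → ∀ b c : ℝ, 0 ≤ b →
      (∀ i p, |x (s i k) i p - xstar p| ≤ b) → (∀ p, |x k l p - xstar p| ≤ c) →
      ∀ p, |x (k+1) l p - xstar p| ≤ ω * (θ * b) + |1 - ω| * c := by
    intro k l hmem b c hb hxb hxc p
    have hEkd : ∀ i, (Ek k i l *ᵥ y k i (q i k)) p = Ek k i l p p * y k i (q i k) p := by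
      intro i
      rw [Matrix.mulVec, dotProduct]
      refine Finset.sum_eq_single_of_mem p (Finset.mem_univ p) fun r _ hr => ?_
      rw [hEkdiag k i l p r (Ne.symm hr), zero_mul]
    have hEk1 : ∑ i, Ek k i l p p = 1 := by
      have h1 := congrFun (congrFun (hEksum k l hmem) p) p
      simpa [Matrix.sum_apply, Matrix.one_apply] using h1
    have hdecomp : x (k+1) l p - xstar p
        = ω * (∑ i, Ek k i l p p * (y k i (q i k) p - xstar p))
          + (1 - ω) * (x k l p - xstar p) := by
      rw [hxj k l hmem]
      show ω * (∑ i, Ek k i l *ᵥ y k i (q i k)) p + (1 - ω) * x k l p - xstar p = _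
      rw [Finset.sum_apply]
      rw [Finset.sum_congr rfl fun i _ => hEkd i]
      have h2 : ∑ i, Ek k i l p p * (y k i (q i k) p - xstar p)
          = (∑ i, Ek k i l p p * y k i (q i k) p) - xstar p := by
        rw [Finset.sum_congr rfl (fun i _ => mul_sub (Ek k i l p p) (y k i (q i k) p) (xstar p)),
          Finset.sum_sub_distrib, ← Finset.sum_mul, hEk1, one_mul]
      rw [h2]
      ring
    rw [hdecomp]
    refine le_trans (abs_add_le _ _) ?_
    have h3 : |ω * (∑ i, Ek k i l p p * (y k i (q i k) p - xstar p))|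
        ≤ ω * (θ * b) := by
      rw [abs_mul, abs_of_pos hω0]
      refine mul_le_mul_of_nonneg_left ?_ hω0.le
      refine le_trans (Finset.abs_sum_le_sum_abs _ _) ?_
      have h4 : ∀ i : Fin m, |Ek k i l p p * (y k i (q i k) p - xstar p)|
          ≤ Ek k i l p p * (θ * b) := by
        intro i
        rw [abs_mul, abs_of_nonneg (hEknn k i l p)]
        exact mul_le_mul_of_nonneg_left (key k i b hb (fun p2 => hxb i p2) p) (hEknn k i l p)
      refine le_trans (Finset.sum_le_sum fun i _ => h4 i) ?_
      rw [← Finset.sum_mul, hEk1, one_mul]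
    have h5 : |(1 - ω) * (x k l p - xstar p)| ≤ |1 - ω| * c := by
      rw [abs_mul]
      exact mul_le_mul_of_nonneg_left (hxc p) (abs_nonneg _)
    linarith
  -- global bound
  set b0 : ℝ := ∑ p, |x0 p - xstar p| with hb0def
  have hb0 : 0 ≤ b0 := Finset.sum_nonneg fun p _ => abs_nonneg _
  have hbase : ∀ p, |x0 p - xstar p| ≤ b0 :=
    fun p => Finset.single_le_sum (f := fun p2 => |x0 p2 - xstar p2|)
      (fun p2 _ => abs_nonneg _) (Finset.mem_univ p)
  have hγle : ∀ b c : ℝ, 0 ≤ b → ω * (θ * b) + |1 - ω| * c = γ * b + |1 - ω| * (c - b) := by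
    intro b c hb; rw [hγdef]; ring
  have BND : ∀ k l p, |x k l p - xstar p| ≤ b0 := by
    intro k
    induction k using Nat.strong_induction_on with
    | _ k ih =>
      match k with
      | 0 =>
          intro l p
          rw [hx0 l]
          exact hbase p
      | Nat.succ k =>
          intro l p
          by_cases hmem : l ∈ J k
          · have h1 := hrec k l hmem b0 b0 hb0
              (fun i p2 => ih (s i k) (Nat.lt_succ_of_le (hs1 i k)) i p2)
              (fun p2 => ih k (Nat.lt_succ_self k) l p2) p
            have h2 : ω * (θ * b0) + |1 - ω| * b0 = γ * b0 := by rw [hγdef]; ring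
            rw [h2] at h1
            refine h1.trans ?_
            nlinarith
          · rw [hxn k l hmem]
            exact ih k (Nat.lt_succ_self k) l p
  -- geometric decay
  have STEP : ∀ j : ℕ, ∃ K : ℕ, ∀ k, K ≤ k → ∀ l p, |x k l p - xstar p| ≤ γ ^ j * b0 := by
    intro j
    induction j with
    | zero =>
        exact ⟨0, fun k _ l p => by simpa using BND k l p⟩
    | succ j ihj =>
        obtain ⟨Kj, hKj⟩ := ihj
        have hev : ∀ᶠ k in atTop, ∀ i : Fin m, Kj ≤ s i k :=
          eventually_all.mpr fun i => (hs2 i).eventually_ge_atTop Kj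
        obtain ⟨K1, hK1⟩ := eventually_atTop.mp hev
        set K' : ℕ := max K1 Kj with hK'def
        have hupd : ∀ l : Fin m, ∃ k, K' ≤ k ∧ l ∈ J k := fun l => hs3 l K'
        choose kl hkl1 hkl2 using hupd
        have hγp : γ ^ (j+1) ≤ γ ^ j := pow_le_pow_of_le_one hγ0 hγ1.le (Nat.le_succ j)
        have haux : ∀ l k, kl l < k → ∀ p, |x k l p - xstar p| ≤ γ ^ (j+1) * b0 := by
          intro l k hk
          induction k, hk using Nat.le_induction with
          | base =>
              have hin : ∀ i p2, |x (s i (kl l)) i p2 - xstar p2| ≤ γ ^ j * b0 := by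
                intro i p2
                refine hKj _ ?_ i p2
                exact hK1 (kl l) (le_trans (le_max_left _ _) (hkl1 l)) i
              have hown : ∀ p2, |x (kl l) l p2 - xstar p2| ≤ γ ^ j * b0 :=
                fun p2 => hKj _ (le_trans (le_max_right _ _) (hkl1 l)) l p2
              intro p
              have h1 := hrec (kl l) l (hkl2 l) (γ ^ j * b0) (γ ^ j * b0)
                (by positivity) hin hown p
              refine h1.trans (le_of_eq ?_)
              rw [hγdef, pow_succ]
              ring
          | succ k hk ihk =>
              intro p
              by_cases hmem : l ∈ J k
              · have hin : ∀ i p2, |x (s i k) i p2 - xstar p2| ≤ γ ^ j * b0 := by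
                  intro i p2
                  refine hKj _ ?_ i p2
                  have h2 : K1 ≤ k :=
                    le_trans (le_trans (le_max_left _ _) (hkl1 l)) (le_trans (Nat.le_succ _) hk)
                  exact hK1 k h2 i
                have h1 := hrec k l hmem (γ ^ j * b0) (γ ^ (j+1) * b0)
                  (by positivity) hin ihk p
                refine h1.trans ?_
                have h3 : |1 - ω| * (γ ^ (j+1) * b0) ≤ |1 - ω| * (γ ^ j * b0) := by
                  refine mul_le_mul_of_nonneg_left ?_ (abs_nonneg _)
                  exact mul_le_mul_of_nonneg_right hγp hb0
                have h4 : ω * (θ * (γ ^ j * b0)) + |1 - ω| * (γ ^ j * b0) = γ ^ (j+1) * b0 := by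
                  rw [hγdef, pow_succ]
                  ring
                linarith
              · rw [hxn k l hmem]
                exact ihk p
        refine ⟨(Finset.univ.sup kl) + 1, fun k hk l p => ?_⟩
        have h1 : kl l < k := by
          have h2 : kl l ≤ Finset.univ.sup kl := Finset.le_sup (Finset.mem_univ l)
          omega
        exact haux l k h1 p
  -- conclusion
  intro l
  rw [tendsto_pi_nhds]
  intro p
  rw [Metric.tendsto_atTop]
  intro ε hε
  have hgeo : Tendsto (fun j : ℕ => γ ^ j * b0) atTop (nhds 0) := by
    have h1 := tendsto_pow_atTop_nhds_zero_of_lt_one hγ0 hγ1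
    have h2 := h1.mul_const b0
    simpa using h2
  have hex : ∃ j : ℕ, γ ^ j * b0 < ε := by
    have := (hgeo.eventually (gt_mem_nhds hε)).exists
    simpa using this
  obtain ⟨j, hj⟩ := hex
  obtain ⟨K, hK⟩ := STEP j
  refine ⟨K, fun k hk => ?_⟩
  rw [Real.dist_eq]
  exact lt_of_le_of_lt (hK k hk l p) hj
end

section
/- (Convergence of the asynchronous relaxed nonstationary multisplitting method, M-matrix case.) Let A ∈ ℝ^{n×n} be an M-matrix, let D be its diagonal part and B = D − A, and set θ = ρ(D⁻¹B). Let ω ∈ (0, 2/(1+θ)). For i = 1, …, m, let A = M_i − N_i be M-splittings. Let x* ∈ ℝⁿ be a solution of LCP(A, f). For each k ∈ ℕ let J(k) ⊆ {1, …, m} be nonempty and let s₁(k), …, s_m(k) ∈ ℕ satisfy: (1) s_i(k) ≤ k for all i and k; (2) lim_{k→∞} s_i(k) = ∞ for all i; (3) for each i, the set {k : i ∈ J(k)} is unbounded. Let η = θ / (Σ_{i=1}^m ‖E_i‖), and suppose q̃ is a positive integer such that ‖(M_i⁻¹N_i)^q‖ ≤ η for all q ≥ q̃ and all i = 1, …,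 m, where ‖·‖ is the matrix ∞-norm; let integers q(i,k) ≥ q̃ be given for all i and k. For each k and each l ∈ J(k), let E_{i,l}^{(k)} (i = 1, …, m) be nonnegative diagonal matrices with Σ_{i=1}^m E_{i,l}^{(k)} = I. Define sequences x^{k,l} ∈ ℝⁿ (l = 1, …, m) by x^{0,l} = x⁰ for all l, and for each k: for each i, set y^{i,0} = x^{s_i(k),i} and for v = 1, …, q(i,k) let y^{i,v} solve LCP(M_i, f + N_i y^{i,v−1}); then x^{k+1,l} = x^{k,l} if l ∉ J(k), and x^{k+1,l} = ω Σ_{i=1}^m E_{i,l}^{(k)} y^{i,q(i,k)} + (1−ω) x^{k,l} if l ∈ J(k). Then for each l, the sequence {x^{k,l}}_{k∈ℕ} converges to x* as k → ∞. -/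
open Matrix Filter

noncomputable section
namespace AsyncAux
variable {n : ℕ}

def vnorm (v : Fin n → ℝ) : ℝ := ⨆ p, |v p|

lemma abs_le_vnorm [Nonempty (Fin n)] (v : Fin n → ℝ) (p : Fin n) : |v p| ≤ vnorm v :=
  le_ciSup (f := fun p => |v p|) (Set.Finite.bddAbove (Set.finite_range _)) p

lemma vnorm_nonneg [Nonempty (Fin n)] (v : Fin n → ℝ) : 0 ≤ vnorm v :=
  le_trans (abs_nonneg _) (abs_le_vnorm v (Classical.arbitrary _))

lemma vnorm_le [Nonempty (Fin n)] {v : Fin n → ℝ} {r : ℝ} (h : ∀ p, |v p| ≤ r) :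
    vnorm v ≤ r := ciSup_le h

lemma rowsum_le_infNorm [Nonempty (Fin n)] (A : Matrix (Fin n) (Fin n) ℝ) (i : Fin n) :
    ∑ j, |A i j| ≤ infNorm A :=
  le_ciSup (f := fun i => ∑ j, |A i j|) (Set.Finite.bddAbove (Set.finite_range _)) i

lemma infNorm_nonneg [Nonempty (Fin n)] (A : Matrix (Fin n) (Fin n) ℝ) : 0 ≤ infNorm A :=
  le_trans (Finset.sum_nonneg fun j _ => abs_nonneg _)
    (rowsum_le_infNorm A (Classical.arbitrary _))

lemma lcp_compl {M : Matrix (Fin n) (Fin n) ℝ} {g x : Fin n → ℝ}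
    (h : SolvesLCP M g x) (j : Fin n) : x j * ((M *ᵥ x) j - g j) = 0 := by
  have := (Finset.sum_eq_zero_iff_of_nonneg (fun i _ =>
    mul_nonneg (h.1 i) (sub_nonneg.2 (h.2.1 i)))).1 h.2.2
  exact this j (Finset.mem_univ j)

/-- For a Z-matrix with nonnegative inverse, an LCP solution is below every feasible point. -/
lemma lcp_le_of_feasible {M : Matrix (Fin n) (Fin n) ℝ} {g x z : Fin n → ℝ}
    (hZ : ∀ i j, i ≠ j → M i j ≤ 0) (hdet : IsUnit M.det) (hinv : ∀ i j, 0 ≤ M⁻¹ i j)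
    (hx : SolvesLCP M g x) (hz0 : ∀ j, 0 ≤ z j) (hzf : ∀ j, g j ≤ (M *ᵥ z) j) :
    ∀ j, x j ≤ z j := by
  set d : Fin n → ℝ := fun j => max (x j - z j) 0 with hd
  have hd0 : ∀ j, 0 ≤ d j := fun j => le_max_right _ _
  have hMd : ∀ j, (M *ᵥ d) j ≤ 0 := by
    intro j
    by_cases hj : 0 < d j
    · have hxz : z j < x j := by
        by_contra hc
        simp only [hd, max_eq_right (sub_nonpos.2 (not_lt.1 hc) : x j - z j ≤ 0)] at hj
        exact lt_irrefl 0 hj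
      have hxpos : 0 < x j := lt_of_le_of_lt (hz0 j) hxz
      have hMxg : (M *ᵥ x) j = g j := by
        have := lcp_compl hx j
        rcases mul_eq_zero.1 this with h | h
        · exact absurd h (ne_of_gt hxpos)
        · linarith [sub_eq_zero.1 h]
      -- (M *ᵥ d) j ≤ (M *ᵥ (x - z)) j ≤ 0
      have h1 : (M *ᵥ d) j ≤ (M *ᵥ fun i => x i - z i) j := by
        simp only [Matrix.mulVec, dotProduct]
        apply Finset.sum_le_sum
        intro i _
        by_cases hij : j = i
        · subst hij
          simp [hd, max_eq_left (le_of_lt (sub_pos.2 hxz))]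
        · have := hZ j i hij
          have hdi : x i - z i ≤ d i := le_max_left _ _
          nlinarith [hd0 i]
      have h2 : (M *ᵥ fun i => x i - z i) j ≤ 0 := by
        have : (M *ᵥ fun i => x i - z i) j = (M *ᵥ x) j - (M *ᵥ z) j := by
          simp [Matrix.mulVec, dotProduct, mul_sub, Finset.sum_sub_distrib]
        rw [this, hMxg]
        linarith [hzf j]
      linarith
    · have hdj : d j = 0 := le_antisymm (not_lt.1 hj) (hd0 j)
      have : (M *ᵥ d) j = ∑ i, M j i * d i := rfl
      rw [this]
      apply Finset.sum_nonpos
      intro i _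
      by_cases hij : j = i
      · subst hij; simp [hdj]
      · exact mul_nonpos_of_nonpos_of_nonneg (hZ j i hij) (hd0 i)
  have hdd : ∀ j, d j ≤ 0 := by
    intro j
    have key : d = M⁻¹ *ᵥ (M *ᵥ d) := by
      rw [Matrix.mulVec_mulVec, Matrix.nonsing_inv_mul _ hdet, Matrix.one_mulVec]
    have : (M⁻¹ *ᵥ (M *ᵥ d)) j ≤ 0 := by
      show ∑ i, M⁻¹ j i * (M *ᵥ d) i ≤ 0
      apply Finset.sum_nonpos
      intro i _
      exact mul_nonpos_of_nonneg_of_nonpos (hinv j i) (hMd i)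
    rw [key]; exact this
  intro j
  have := le_antisymm (hdd j) (hd0 j)
  have : max (x j - z j) 0 = 0 := this
  have := le_max_left (x j - z j) 0
  linarith [this.trans_eq ‹max (x j - z j) 0 = 0›]

end AsyncAux
namespace AsyncAux
variable {n : ℕ}

/-- Lipschitz property of LCP solutions w.r.t. right-hand side. -/
lemma lcp_lipschitz {M : Matrix (Fin n) (Fin n) ℝ} {g g' x x' : Fin n → ℝ}
    (hZ : ∀ i j, i ≠ j → M i j ≤ 0) (hdet : IsUnit M.det) (hinv : ∀ i j, 0 ≤ M⁻¹ i j)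
    (hx : SolvesLCP M g x) (hx' : SolvesLCP M g' x') :
    ∀ j, |x j - x' j| ≤ (M⁻¹ *ᵥ fun p => |g p - g' p|) j := by
  have key : ∀ (u u' : Fin n → ℝ) (h h' : Fin n → ℝ), SolvesLCP M h u → SolvesLCP M h' u' →
      ∀ j, u j - u' j ≤ (M⁻¹ *ᵥ fun p => |h p - h' p|) j := by
    intro u u' h h' hu hu' j
    have hle := lcp_le_of_feasible hZ hdet hinv hu
      (z := fun i => u' i + (M⁻¹ *ᵥ fun p => |h p - h' p|) i)
      (by
        intro i
        have : (0:ℝ) ≤ ∑ r, M⁻¹ i r * |h r - h' r| :=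
          Finset.sum_nonneg fun r _ => mul_nonneg (hinv i r) (abs_nonneg _)
        exact add_nonneg (hu'.1 i) this)
      (by
        intro i
        have hMz : (M *ᵥ fun r => u' r + (M⁻¹ *ᵥ fun p => |h p - h' p|) r) i
            = (M *ᵥ u') i + (M *ᵥ (M⁻¹ *ᵥ fun p => |h p - h' p|)) i := by
          simp [Matrix.mulVec, dotProduct, mul_add, Finset.sum_add_distrib]
        have hMM : (M *ᵥ (M⁻¹ *ᵥ fun p => |h p - h' p|)) = fun p => |h p - h' p| := by
          rw [Matrix.mulVec_mulVec, Matrix.mul_nonsing_inv _ hdet, Matrix.one_mulVec]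
        rw [hMz, hMM]
        have := hu'.2.1 i
        have := abs_sub_abs_le_abs_sub (h i) (h' i)
        have := le_abs_self (h i - h' i)
        linarith)
    have := hle j
    linarith
  intro j
  have h1 := key x x' g g' hx hx' j
  have h2 := key x' x g' g hx' hx j
  have he : (fun p => |g' p - g p|) = fun p => |g p - g' p| := by
    funext p; exact abs_sub_comm _ _
  rw [he] at h2
  rw [abs_le]
  constructor <;> linarith

end AsyncAux
namespace AsyncAux
variable {n : ℕ}

lemma mulVec_mono {P : Matrix (Fin n) (Fin n) ℝ} (hP : ∀ i j, 0 ≤ P i j)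
    {w w' : Fin n → ℝ} (h : ∀ j, w j ≤ w' j) : ∀ j, (P *ᵥ w) j ≤ (P *ᵥ w') j := by
  intro j
  show ∑ i, P j i * w i ≤ ∑ i, P j i * w' i
  apply Finset.sum_le_sum
  intro i _
  exact mul_le_mul_of_nonneg_left (h i) (hP j i)

lemma pow_entries_nonneg {P : Matrix (Fin n) (Fin n) ℝ} (hP : ∀ i j, 0 ≤ P i j)
    (v : ℕ) : ∀ i j, 0 ≤ (P ^ v) i j := by
  induction v with
  | zero =>
    intro i j
    by_cases hij : i = j <;> simp [pow_zero, Matrix.one_apply, hij]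
  | succ v ih =>
    intro i j
    rw [pow_succ, Matrix.mul_apply]
    exact Finset.sum_nonneg fun k _ => mul_nonneg (ih i k) (hP k j)

/-- Inner iteration error bound, entrywise. -/
lemma inner_iter_bound {M N : Matrix (Fin n) (Fin n) ℝ} {f xs : Fin n → ℝ}
    (hZ : ∀ i j, i ≠ j → M i j ≤ 0) (hdet : IsUnit M.det) (hinv : ∀ i j, 0 ≤ M⁻¹ i j)
    (hN : ∀ i j, 0 ≤ N i j)
    (hxs : SolvesLCP M (fun p => f p + (N *ᵥ xs) p) xs)
    (y : ℕ → Fin n → ℝ) (q : ℕ)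
    (hy : ∀ v, v < q → SolvesLCP M (fun p => f p + (N *ᵥ y v) p) (y (v + 1))) :
    ∀ v, v ≤ q → ∀ j, |y v j - xs j| ≤ (((M⁻¹ * N) ^ v) *ᵥ fun p => |y 0 p - xs p|) j := by
  have hMN : ∀ i j, 0 ≤ (M⁻¹ * N) i j := by
    intro i j
    rw [Matrix.mul_apply]
    exact Finset.sum_nonneg fun k _ => mul_nonneg (hinv i k) (hN k j)
  intro v
  induction v with
  | zero =>
    intro _ j
    simp only [pow_zero, Matrix.one_mulVec]
    exact le_of_eq rfl
  | succ v ih =>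
    intro hvq j
    have hv : v < q := Nat.lt_of_succ_le hvq
    have hlip := lcp_lipschitz hZ hdet hinv (hy v hv) hxs j
    have h1 : ∀ p, |(f p + (N *ᵥ y v) p) - (f p + (N *ᵥ xs) p)|
        ≤ (N *ᵥ fun r => |y v r - xs r|) p := by
      intro p
      have : (f p + (N *ᵥ y v) p) - (f p + (N *ᵥ xs) p)
          = ∑ r, N p r * (y v r - xs r) := by
        simp [Matrix.mulVec, dotProduct, mul_sub, Finset.sum_sub_distrib]
      rw [this]
      calc |∑ r, N p r * (y v r - xs r)| ≤ ∑ r, |N p r * (y v r - xs r)| :=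
            Finset.abs_sum_le_sum_abs _ _
        _ ≤ ∑ r, N p r * |y v r - xs r| := by
            apply Finset.sum_le_sum
            intro r _
            rw [abs_mul, abs_of_nonneg (hN p r)]
        _ = (N *ᵥ fun r => |y v r - xs r|) p := rfl
    -- chain
    have h2 : (M⁻¹ *ᵥ fun p => |(f p + (N *ᵥ y v) p) - (f p + (N *ᵥ xs) p)|) j
        ≤ (M⁻¹ *ᵥ (N *ᵥ fun r => |y v r - xs r|)) j :=
      mulVec_mono hinv h1 j
    have h3 : (M⁻¹ *ᵥ (N *ᵥ fun r => |y v r - xs r|)) j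
        ≤ (M⁻¹ *ᵥ (N *ᵥ (((M⁻¹ * N) ^ v) *ᵥ fun p => |y 0 p - xs p|))) j := by
      rw [Matrix.mulVec_mulVec, Matrix.mulVec_mulVec]
      apply mulVec_mono (P := M⁻¹ * N) hMN
      intro r
      have := ih (le_of_lt hv) r
      calc (fun r => |y v r - xs r|) r = |y v r - xs r| := rfl
        _ ≤ (((M⁻¹ * N) ^ v) *ᵥ fun p => |y 0 p - xs p|) r := this
    have h4 : (M⁻¹ *ᵥ (N *ᵥ (((M⁻¹ * N) ^ v) *ᵥ fun p => |y 0 p - xs p|))) j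
        = (((M⁻¹ * N) ^ (v + 1)) *ᵥ fun p => |y 0 p - xs p|) j := by
      rw [Matrix.mulVec_mulVec, Matrix.mulVec_mulVec, pow_succ', Matrix.mul_assoc]
    calc |y (v+1) j - xs j| ≤ _ := hlip
      _ ≤ _ := h2
      _ ≤ _ := h3
      _ = _ := h4

/-- From an entrywise bound through a matrix, get a sup-norm bound. -/
lemma vnorm_le_infNorm_mul [Nonempty (Fin n)] {P : Matrix (Fin n) (Fin n) ℝ}
    {u w : Fin n → ℝ} (h : ∀ j, |u j| ≤ (P *ᵥ fun p => |w p|) j) :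
    vnorm u ≤ infNorm P * vnorm w := by
  apply vnorm_le
  intro p
  calc |u p| ≤ (P *ᵥ fun r => |w r|) p := h p
    _ = ∑ r, P p r * |w r| := rfl
    _ ≤ ∑ r, |P p r| * vnorm w := by
        apply Finset.sum_le_sum
        intro r _
        calc P p r * |w r| ≤ |P p r| * |w r| :=
              mul_le_mul_of_nonneg_right (le_abs_self _) (abs_nonneg _)
          _ ≤ |P p r| * vnorm w := mul_le_mul_of_nonneg_left (abs_le_vnorm w r) (abs_nonneg _)
    _ = (∑ r, |P p r|) * vnorm w := by rw [Finset.sum_mul]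
    _ ≤ infNorm P * vnorm w := mul_le_mul_of_nonneg_right (rowsum_le_infNorm P p) (vnorm_nonneg w)

end AsyncAux
namespace AsyncAux
variable {n : ℕ}

lemma mmat_diag_pos {A : Matrix (Fin n) (Fin n) ℝ} (hA : IsMMat A) (i : Fin n) :
    0 < A i i := by
  have h1 : (A * A⁻¹) i i = 1 := by
    rw [Matrix.mul_nonsing_inv _ hA.2.1, Matrix.one_apply_eq]
  rw [Matrix.mul_apply] at h1
  have hsplit : A i i * A⁻¹ i i = 1 - ∑ j ∈ Finset.univ.erase i, A i j * A⁻¹ j i := by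
    rw [← h1, ← Finset.add_sum_erase _ _ (Finset.mem_univ i)]; ring
  have hoff : ∑ j ∈ Finset.univ.erase i, A i j * A⁻¹ j i ≤ 0 := by
    apply Finset.sum_nonpos
    intro j hj
    exact mul_nonpos_of_nonpos_of_nonneg (hA.1 i j fun h => (Finset.mem_erase.1 hj).1 h.symm)
      (hA.2.2 j i)
  have hprod : 1 ≤ A i i * A⁻¹ i i := by rw [hsplit]; linarith
  nlinarith [hA.2.2 i i]

lemma theta_lt_one [Nonempty (Fin n)] {A : Matrix (Fin n) (Fin n) ℝ} (hA : IsMMat A) :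
    specRad ((Matrix.diagonal fun p => A p p)⁻¹ *
      (Matrix.diagonal (fun p => A p p) - A)) < 1 := by
  classical
  have dpos : ∀ i, 0 < A i i := mmat_diag_pos hA
  set d : Fin n → ℝ := fun p => A p p with hdd
  set J : Matrix (Fin n) (Fin n) ℝ :=
    (Matrix.diagonal d)⁻¹ * (Matrix.diagonal d - A) with hJdef
  have hdiag_inv : (Matrix.diagonal d)⁻¹ = Matrix.diagonal (fun p => (d p)⁻¹) := by
    apply Matrix.inv_eq_left_inv
    rw [Matrix.diagonal_mul_diagonal]
    have he : (fun i => (d i)⁻¹ * d i) = fun _ => (1:ℝ) :=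
      funext fun i => inv_mul_cancel₀ (dpos i).ne'
    rw [he, Matrix.diagonal_one]
  have hJentry : ∀ i j, J i j = if i = j then 0 else (d i)⁻¹ * (-A i j) := by
    intro i j
    rw [hJdef, hdiag_inv, Matrix.diagonal_mul]
    by_cases hij : i = j
    · subst hij; simp [Matrix.diagonal_apply_eq, hdd]
    · simp [Matrix.diagonal_apply_ne _ hij, hij]
  have hJnn : ∀ i j, 0 ≤ J i j := by
    intro i j
    rw [hJentry]
    by_cases hij : i = j
    · simp [hij]
    · simp only [hij, if_false]
      exact mul_nonneg (le_of_lt (inv_pos.2 (dpos i)))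
        (neg_nonneg.2 (hA.1 i j hij))
  set xv : Fin n → ℝ := A⁻¹ *ᵥ (fun _ => 1) with hxv
  have hAx : A *ᵥ xv = fun _ => (1:ℝ) := by
    rw [hxv, Matrix.mulVec_mulVec, Matrix.mul_nonsing_inv _ hA.2.1, Matrix.one_mulVec]
  have hxnn : ∀ i, 0 ≤ xv i := by
    intro i
    show (0:ℝ) ≤ ∑ j, A⁻¹ i j * 1
    apply Finset.sum_nonneg
    intro j _
    simpa using hA.2.2 i j
  have hxpos : ∀ i, 0 < xv i := by
    intro i
    rcases lt_or_eq_of_le (hxnn i) with h | h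
    · exact h
    · exfalso
      have hz : ∀ j, A⁻¹ i j = 0 := by
        have := (Finset.sum_eq_zero_iff_of_nonneg (fun j (_ : j ∈ Finset.univ) => by
          simpa using hA.2.2 i j)).1 ?_
        · intro j; simpa using this j (Finset.mem_univ j)
        · have : xv i = ∑ j, A⁻¹ i j * 1 := rfl
          simp only [mul_one] at this
          rw [← this, ← h]
      have h1 : (A⁻¹ * A) i i = 1 := by
        rw [Matrix.nonsing_inv_mul _ hA.2.1, Matrix.one_apply_eq]
      rw [Matrix.mul_apply] at h1
      simp [hz] at h1
  have hJx : ∀ i, (J *ᵥ xv) i = xv i - (d i)⁻¹ := by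
    intro i
    rw [hJdef, ← Matrix.mulVec_mulVec, Matrix.sub_mulVec, hdiag_inv]
    have h1 : ((Matrix.diagonal d).mulVec xv - A.mulVec xv) = fun p => d p * xv p - 1 := by
      funext p
      simp [Matrix.mulVec_diagonal, hAx]
    rw [h1]
    rw [Matrix.mulVec_diagonal]
    have := (dpos i).ne'
    field_simp
    rw [sub_div, mul_div_cancel_left₀ _ (show d i ≠ 0 from (dpos i).ne')]
  -- the uniform bound γ
  set γ : ℝ := Finset.univ.sup' Finset.univ_nonempty (fun i => (J *ᵥ xv) i / xv i) with hγ
  have hγlt : γ < 1 := by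
    rw [hγ, Finset.sup'_lt_iff]
    intro i _
    rw [hJx i, div_lt_one (hxpos i)]
    have : 0 < (d i)⁻¹ := inv_pos.2 (dpos i)
    linarith
  have hγnn : 0 ≤ γ := by
    have i0 : Fin n := Classical.arbitrary _
    have h1 : (J *ᵥ xv) i0 / xv i0 ≤ γ :=
      Finset.le_sup' (f := fun i => (J *ᵥ xv) i / xv i) (Finset.mem_univ i0)
    have h2 : 0 ≤ (J *ᵥ xv) i0 := by
      show (0:ℝ) ≤ ∑ j, J i0 j * xv j
      exact Finset.sum_nonneg fun j _ => mul_nonneg (hJnn i0 j) (hxnn j)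
    exact le_trans (div_nonneg h2 (le_of_lt (hxpos i0))) h1
  have hbound : ∀ r ∈ {r : ℝ | ∃ μ : ℂ, μ ∈ spectrum ℂ (J.map Complex.ofReal)
      ∧ r = ‖μ‖}, r ≤ γ := by
    rintro r ⟨μ, hμ, rfl⟩
    rw [spectrum.mem_iff] at hμ
    have hdet : ((algebraMap ℂ (Matrix (Fin n) (Fin n) ℂ)) μ - J.map Complex.ofReal).det = 0 := by
      by_contra hne
      exact hμ ((Matrix.isUnit_iff_isUnit_det _).2 (isUnit_iff_ne_zero.2 hne))
    obtain ⟨v, hv0, hv⟩ := (Matrix.exists_mulVec_eq_zero_iff).2 hdet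
    have heig : (J.map Complex.ofReal) *ᵥ v = fun i => μ * v i := by
      funext i
      have := congrFun hv i
      rw [Matrix.sub_mulVec] at this
      have h2 : ((algebraMap ℂ (Matrix (Fin n) (Fin n) ℂ)) μ *ᵥ v) i = μ * v i := by
        rw [Matrix.algebraMap_eq_diagonal, Matrix.mulVec_diagonal]
        rfl
      have h3 := sub_eq_zero.1 this
      rw [← h3, h2]
    -- choose maximizing index
    obtain ⟨i, -, hmax⟩ := Finset.exists_max_image Finset.univ
      (fun i => ‖v i‖ / xv i) Finset.univ_nonempty
    have hvi : v i ≠ 0 := by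
      intro h0
      apply hv0
      funext j
      have := hmax j (Finset.mem_univ j)
      rw [h0] at this
      simp only [norm_zero, zero_div] at this
      have h1 : 0 ≤ ‖v j‖ / xv j :=
        div_nonneg (norm_nonneg _) (le_of_lt (hxpos j))
      have h2 : ‖v j‖ / xv j = 0 := le_antisymm this h1
      have := (div_eq_zero_iff.1 h2).resolve_right (hxpos j).ne'
      exact norm_eq_zero.1 this
    have hvipos : 0 < ‖v i‖ := by
      simpa [norm_pos_iff] using hvi
    have hstep : ‖μ‖ * ‖v i‖ ≤ γ * ‖v i‖ := by
      have h1 : ‖μ * v i‖ = ‖μ‖ * ‖v i‖ := norm_mul _ _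
      have h2 : μ * v i = ∑ j, (Complex.ofReal (J i j)) * v j := by
        have := congrFun heig i
        rw [← this]
        rfl
      have h3 : ‖∑ j, (Complex.ofReal (J i j)) * v j‖
          ≤ ∑ j, J i j * ‖v j‖ := by
        refine le_trans (norm_sum_le _ _) ?_
        apply Finset.sum_le_sum
        intro j _
        rw [norm_mul, Complex.norm_real, Real.norm_eq_abs, abs_of_nonneg (hJnn i j)]
      have h4 : ∀ j, ‖v j‖ ≤ (‖v i‖ / xv i) * xv j := by
        intro j
        have hm := hmax j (Finset.mem_univ j)
        exact (div_le_iff₀ (hxpos j)).1 hm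
      have h5 : ∑ j, J i j * ‖v j‖
          ≤ (‖v i‖ / xv i) * (J *ᵥ xv) i := by
        have : (J *ᵥ xv) i = ∑ j, J i j * xv j := rfl
        rw [this, Finset.mul_sum]
        apply Finset.sum_le_sum
        intro j _
        calc J i j * ‖v j‖ ≤ J i j * ((‖v i‖ / xv i) * xv j) :=
              mul_le_mul_of_nonneg_left (h4 j) (hJnn i j)
          _ = ‖v i‖ / xv i * (J i j * xv j) := by ring
      have h6 : (J *ᵥ xv) i ≤ γ * xv i := by
        have hle : (J *ᵥ xv) i / xv i ≤ γ :=
          Finset.le_sup' (f := fun i => (J *ᵥ xv) i / xv i) (Finset.mem_univ i)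
        rw [div_le_iff₀ (hxpos i)] at hle
        linarith
      calc ‖μ‖ * ‖v i‖ = ‖μ * v i‖ := (norm_mul _ _).symm
        _ = ‖∑ j, (Complex.ofReal (J i j)) * v j‖ := by rw [h2]
        _ ≤ ∑ j, J i j * ‖v j‖ := h3
        _ ≤ (‖v i‖ / xv i) * (J *ᵥ xv) i := h5
        _ ≤ (‖v i‖ / xv i) * (γ * xv i) :=
            mul_le_mul_of_nonneg_left h6 (div_nonneg (norm_nonneg _)
              (le_of_lt (hxpos i)))
        _ = γ * ‖v i‖ * (xv i / xv i) := by ring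
        _ = γ * ‖v i‖ := by rw [div_self (hxpos i).ne']; ring
    exact le_of_mul_le_mul_right hstep hvipos
  calc specRad J ≤ γ := Real.sSup_le hbound hγnn
    _ < 1 := hγlt

end AsyncAux
end
set_option maxHeartbeats 1000000 in
open AsyncAux in
/-- Corollary 3.1: convergence of the asynchronous relaxed nonstationary
multisplitting method for LCP with an M-matrix and M-splittings. -/
theorem async_relaxed_nonstationary_multisplitting_converges_M {n m : ℕ}
    (A : Matrix (Fin n) (Fin n) ℝ) (f xstar x0 : Fin n → ℝ)
    (hA : IsMMat A)
    (θ : ℝ)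
    (hθ : θ = specRad ((Matrix.diagonal fun p => A p p)⁻¹ *
      (Matrix.diagonal (fun p => A p p) - A)))
    (ω : ℝ) (hω : 0 < ω ∧ ω < 2 / (1 + θ))
    (M N : Fin m → Matrix (Fin n) (Fin n) ℝ)
    (hsplit : ∀ i, A = M i - N i)
    (hMM : ∀ i, IsMMat (M i))
    (hNnn : ∀ i, ∀ p q, 0 ≤ N i p q)
    (hxstar : SolvesLCP A f xstar)
    (J : ℕ → Finset (Fin m)) (hJ : ∀ k, (J k).Nonempty)
    (s : Fin m → ℕ → ℕ)
    (hs1 : ∀ i k, s i k ≤ k)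
    (hs2 : ∀ i, Filter.Tendsto (s i) Filter.atTop Filter.atTop)
    (hs3 : ∀ i, ∀ K : ℕ, ∃ k, K ≤ k ∧ i ∈ J k)
    (E : Fin m → Matrix (Fin n) (Fin n) ℝ)
    (hEdiag : ∀ i p q, p ≠ q → E i p q = 0)
    (hEnn : ∀ i p, 0 ≤ E i p p)
    (hEsum : ∑ i, E i = 1)
    (η : ℝ) (hη : η = θ / ∑ i, infNorm (E i))
    (qt : ℕ) (hqt : 0 < qt)
    (hnorm : ∀ i, ∀ q, qt ≤ q → infNorm (((M i)⁻¹ * N i) ^ q) ≤ η)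
    (q : Fin m → ℕ → ℕ) (hq : ∀ i k, qt ≤ q i k)
    (Ek : ℕ → Fin m → Fin m → Matrix (Fin n) (Fin n) ℝ)
    (hEkdiag : ∀ k i l, ∀ p r, p ≠ r → Ek k i l p r = 0)
    (hEknn : ∀ k i l p, 0 ≤ Ek k i l p p)
    (hEksum : ∀ k l, l ∈ J k → ∑ i, Ek k i l = 1)
    (x : ℕ → Fin m → Fin n → ℝ) (hx0 : ∀ l, x 0 l = x0)
    (y : ℕ → Fin m → ℕ → Fin n → ℝ)
    (hy0 : ∀ k i, y k i 0 = x (s i k) i)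
    (hy : ∀ k i v, 1 ≤ v → v ≤ q i k →
      SolvesLCP (M i) (fun p => f p + (N i *ᵥ y k i (v - 1)) p) (y k i v))
    (hxn : ∀ k l, l ∉ J k → x (k + 1) l = x k l)
    (hxj : ∀ k l, l ∈ J k →
      x (k + 1) l = ω • (∑ i, Ek k i l *ᵥ y k i (q i k)) + (1 - ω) • x k l) :
    ∀ l, Filter.Tendsto (fun k => x k l) Filter.atTop (nhds xstar) := by
  classical
  -- trivial case n = 0
  rcases Nat.eq_zero_or_pos n with hn | hn
  · subst hn
    intro l
    have hconst : (fun k => x k l) = fun _ => xstar :=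
      funext fun k => funext fun p => p.elim0
    rw [hconst]
    exact tendsto_const_nhds
  have hNn : Nonempty (Fin n) := ⟨⟨0, hn⟩⟩
  have hNm : Nonempty (Fin m) := ⟨(hJ 0).choose⟩
  -- error sequence
  set e : ℕ → Fin m → ℝ := fun k l' => vnorm (fun p => x k l' p - xstar p) with he
  have henn : ∀ k l', 0 ≤ e k l' := fun k l' => vnorm_nonneg _
  -- basic scalar facts
  have hηnn : 0 ≤ η := le_trans (infNorm_nonneg _) (hnorm (Classical.arbitrary _) qt le_rfl)
  have hS1 : (1:ℝ) ≤ ∑ i, infNorm (E i) := by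
    have p0 : Fin n := Classical.arbitrary _
    have h1 : ∀ i, |E i p0 p0| ≤ infNorm (E i) := by
      intro i
      refine le_trans ?_ (rowsum_le_infNorm (E i) p0)
      exact Finset.single_le_sum (f := fun j => |E i p0 j|) (fun j _ => abs_nonneg _)
        (Finset.mem_univ p0)
    have h2 : (1:ℝ) = |∑ i, E i p0 p0| := by
      have h := congrFun (congrFun hEsum p0) p0
      have h' : ∑ i, E i p0 p0 = 1 := by
        simpa [Matrix.sum_apply, Matrix.one_apply_eq] using h
      rw [h']
      norm_num
    calc (1:ℝ) = |∑ i, E i p0 p0| := h2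
      _ ≤ ∑ i, |E i p0 p0| := Finset.abs_sum_le_sum_abs _ _
      _ ≤ ∑ i, infNorm (E i) := Finset.sum_le_sum fun i _ => h1 i
  have hSpos : (0:ℝ) < ∑ i, infNorm (E i) := lt_of_lt_of_le one_pos hS1
  have hθnn : 0 ≤ θ := by
    have : θ = η * ∑ i, infNorm (E i) := by
      rw [hη]; field_simp
    rw [this]
    exact mul_nonneg hηnn (le_of_lt hSpos)
  have hηθ : η ≤ θ := by
    rw [hη]
    exact div_le_self hθnn hS1
  have hθ1 : θ < 1 := hθ ▸ theta_lt_one hA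
  -- contraction constant
  set c : ℝ := ω * η + |1 - ω| with hc
  have hω1θ : ω * (1 + θ) < 2 := by
    have h2 : (0:ℝ) < 1 + θ := by linarith
    have := hω.2
    rw [lt_div_iff₀ h2] at this
    linarith
  have hc1 : c < 1 := by
    rcases le_or_gt ω 1 with h | h
    · rw [hc, abs_of_nonneg (by linarith : (0:ℝ) ≤ 1 - ω)]
      nlinarith [hω.1]
    · rw [hc, abs_of_neg (by linarith : 1 - ω < 0)]
      nlinarith [hω.1]
  have hc0 : 0 ≤ c := by
    rw [hc]
    have := abs_nonneg (1 - ω)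
    nlinarith [hω.1]
  -- x* solves each inner LCP
  have hMi : ∀ i, M i = A + N i := by
    intro i
    rw [hsplit i]
    abel
  have hxstar_i : ∀ i, SolvesLCP (M i) (fun p => f p + (N i *ᵥ xstar) p) xstar := by
    intro i
    have hMv : ∀ p, (M i *ᵥ xstar) p = (A *ᵥ xstar) p + (N i *ᵥ xstar) p := by
      intro p
      rw [hMi i, Matrix.add_mulVec]
      rfl
    refine ⟨hxstar.1, ?_, ?_⟩
    · intro j
      have h1 := hxstar.2.1 j
      show f j + (N i *ᵥ xstar) j ≤ (M i *ᵥ xstar) j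
      rw [hMv j]
      linarith
    · show ∑ j, xstar j * ((M i *ᵥ xstar) j - (f j + (N i *ᵥ xstar) j)) = 0
      have : ∀ j, xstar j * ((M i *ᵥ xstar) j - (f j + (N i *ᵥ xstar) j))
          = xstar j * ((A *ᵥ xstar) j - f j) := by
        intro j
        rw [hMv j]
        ring
      calc ∑ j, xstar j * ((M i *ᵥ xstar) j - (f j + (N i *ᵥ xstar) j))
          = ∑ j, xstar j * ((A *ᵥ xstar) j - f j) := Finset.sum_congr rfl fun j _ => this j
        _ = 0 := hxstar.2.2
  -- inner iteration bound
  have innerB : ∀ k i, vnorm (fun p => y k i (q i k) p - xstar p) ≤ η * e (s i k) i := by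
    intro k i
    have hiter := inner_iter_bound (hMM i).1 (hMM i).2.1 (hMM i).2.2 (hNnn i)
      (hxstar_i i) (fun v => y k i v) (q i k)
      (fun v hv => by
        have h := hy k i (v + 1) (Nat.le_add_left 1 v) (Nat.succ_le_of_lt hv)
        simpa [Nat.add_sub_cancel] using h)
      (q i k) le_rfl
    have hnb := vnorm_le_infNorm_mul (P := ((M i)⁻¹ * N i) ^ (q i k))
      (u := fun p => y k i (q i k) p - xstar p) (w := fun p => y k i 0 p - xstar p)
      (fun j => by
        have := hiter j
        calc |y k i (q i k) j - xstar j|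
            ≤ ((((M i)⁻¹ * N i) ^ (q i k)) *ᵥ fun p => |y k i 0 p - xstar p|) j := this
          _ = ((((M i)⁻¹ * N i) ^ (q i k)) *ᵥ fun p => |(fun r => y k i 0 r - xstar r) p|) j := rfl)
    have hynorm : vnorm (fun p => y k i 0 p - xstar p) = e (s i k) i := by
      rw [he, hy0 k i]
    calc vnorm (fun p => y k i (q i k) p - xstar p)
        ≤ infNorm (((M i)⁻¹ * N i) ^ (q i k)) * vnorm (fun p => y k i 0 p - xstar p) := hnb
      _ ≤ η * vnorm (fun p => y k i 0 p - xstar p) :=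
          mul_le_mul_of_nonneg_right (hnorm i (q i k) (hq i k)) (vnorm_nonneg _)
      _ = η * e (s i k) i := by rw [hynorm]
  -- delayed maximum
  set Mk : ℕ → ℝ := fun k => Finset.univ.sup' Finset.univ_nonempty (fun i => e (s i k) i)
    with hMk
  have hMknn : ∀ k, 0 ≤ Mk k := by
    intro k
    have i0 : Fin m := Classical.arbitrary _
    exact le_trans (henn _ _) (Finset.le_sup' (f := fun i => e (s i k) i) (Finset.mem_univ i0))
  have hMkle : ∀ k R, (∀ i, e (s i k) i ≤ R) → Mk k ≤ R := by
    intro k R h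
    exact Finset.sup'_le _ _ fun i _ => h i
  have hleMk : ∀ k i, e (s i k) i ≤ Mk k := fun k i =>
    Finset.le_sup' (f := fun i => e (s i k) i) (Finset.mem_univ i)
  -- one-step bound
  have SB : ∀ k l', l' ∈ J k → e (k+1) l' ≤ ω * η * Mk k + |1 - ω| * e k l' := by
    intro k l' hl
    have hx1 := hxj k l' hl
    have hsum1 : ∀ p, ∑ i, Ek k i l' p p = (1:ℝ) := by
      intro p
      have h := congrFun (congrFun (hEksum k l' hl) p) p
      simpa [Matrix.sum_apply, Matrix.one_apply_eq] using h
    have hEv : ∀ i (w : Fin n → ℝ) p, (Ek k i l' *ᵥ w) p = Ek k i l' p p * w p := by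
      intro i w p
      show ∑ r, Ek k i l' p r * w r = Ek k i l' p p * w p
      rw [Finset.sum_eq_single p]
      · intro r _ hr
        rw [hEkdiag k i l' p r (fun hh => hr hh.symm), zero_mul]
      · intro hp
        exact absurd (Finset.mem_univ p) hp
    show vnorm (fun p => x (k+1) l' p - xstar p) ≤ ω * η * Mk k + |1 - ω| * e k l'
    apply vnorm_le
    intro p
    have hxp : x (k+1) l' p
        = ω * (∑ i, Ek k i l' p p * y k i (q i k) p) + (1 - ω) * x k l' p := by
      rw [hx1]
      simp only [Pi.add_apply, Pi.smul_apply, smul_eq_mul, Finset.sum_apply]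
      congr 2
      exact Finset.sum_congr rfl fun i _ => hEv i _ p
    have hxs : x (k+1) l' p - xstar p
        = ω * (∑ i, Ek k i l' p p * (y k i (q i k) p - xstar p))
          + (1 - ω) * (x k l' p - xstar p) := by
      have hexp : ∑ i, Ek k i l' p p * (y k i (q i k) p - xstar p)
          = (∑ i, Ek k i l' p p * y k i (q i k) p) - (∑ i, Ek k i l' p p) * xstar p := by
        rw [Finset.sum_mul, ← Finset.sum_sub_distrib]
        exact Finset.sum_congr rfl fun i _ => by ring
      rw [hxp, hexp, hsum1 p]
      ring
    have hyb : ∀ i, |y k i (q i k) p - xstar p| ≤ η * Mk k := by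
      intro i
      have h1 : |y k i (q i k) p - xstar p| ≤ vnorm (fun r => y k i (q i k) r - xstar r) :=
        abs_le_vnorm (fun r => y k i (q i k) r - xstar r) p
      exact h1.trans ((innerB k i).trans (mul_le_mul_of_nonneg_left (hleMk k i) hηnn))
    have hsb : |∑ i, Ek k i l' p p * (y k i (q i k) p - xstar p)| ≤ η * Mk k := by
      calc |∑ i, Ek k i l' p p * (y k i (q i k) p - xstar p)|
          ≤ ∑ i, |Ek k i l' p p * (y k i (q i k) p - xstar p)| := Finset.abs_sum_le_sum_abs _ _
        _ ≤ ∑ i, Ek k i l' p p * (η * Mk k) := by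
            apply Finset.sum_le_sum
            intro i _
            rw [abs_mul, abs_of_nonneg (hEknn k i l' p)]
            exact mul_le_mul_of_nonneg_left (hyb i) (hEknn k i l' p)
        _ = (∑ i, Ek k i l' p p) * (η * Mk k) := (Finset.sum_mul _ _ _).symm
        _ = η * Mk k := by rw [hsum1 p, one_mul]
    have hxe : |x k l' p - xstar p| ≤ e k l' :=
      abs_le_vnorm (fun r => x k l' r - xstar r) p
    calc |x (k+1) l' p - xstar p|
        = |ω * (∑ i, Ek k i l' p p * (y k i (q i k) p - xstar p))
            + (1 - ω) * (x k l' p - xstar p)| := by rw [hxs]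
      _ ≤ |ω * (∑ i, Ek k i l' p p * (y k i (q i k) p - xstar p))|
            + |(1 - ω) * (x k l' p - xstar p)| := abs_add_le _ _
      _ = ω * |∑ i, Ek k i l' p p * (y k i (q i k) p - xstar p)|
            + |1 - ω| * |x k l' p - xstar p| := by
          rw [abs_mul, abs_mul, abs_of_nonneg hω.1.le]
      _ ≤ ω * (η * Mk k) + |1 - ω| * e k l' :=
          add_le_add (mul_le_mul_of_nonneg_left hsb hω.1.le)
            (mul_le_mul_of_nonneg_left hxe (abs_nonneg _))
      _ = ω * η * Mk k + |1 - ω| * e k l' := by ring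
  -- global boundedness
  set B0 : ℝ := Finset.univ.sup' Finset.univ_nonempty (fun l' => e 0 l') with hB0
  have hB0nn : 0 ≤ B0 :=
    le_trans (henn 0 (Classical.arbitrary _))
      (Finset.le_sup' (f := fun l' => e 0 l') (Finset.mem_univ _))
  have hB : ∀ k l', e k l' ≤ B0 := by
    intro k
    induction k using Nat.strong_induction_on with
    | _ k ih =>
      match k with
      | 0 => exact fun l' => Finset.le_sup' (f := fun l' => e 0 l') (Finset.mem_univ l')
      | Nat.succ k =>
        intro l'
        show e (k + 1) l' ≤ B0
        by_cases hl : l' ∈ J k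
        · have h1 := SB k l' hl
          have h2 : Mk k ≤ B0 := hMkle k B0 fun i => ih (s i k) (Nat.lt_succ_of_le (hs1 i k)) i
          have h3 : e k l' ≤ B0 := ih k (Nat.lt_succ_self k) l'
          have habs := abs_nonneg (1 - ω)
          calc e (k + 1) l' ≤ ω * η * Mk k + |1 - ω| * e k l' := h1
            _ ≤ ω * η * B0 + |1 - ω| * B0 := add_le_add
                (mul_le_mul_of_nonneg_left h2 (mul_nonneg hω.1.le hηnn))
                (mul_le_mul_of_nonneg_left h3 habs)
            _ = (ω * η + |1 - ω|) * B0 := by ring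
            _ ≤ 1 * B0 := mul_le_mul_of_nonneg_right (hc ▸ hc1.le) hB0nn
            _ = B0 := one_mul _
        · have h1 : e (k+1) l' = e k l' := by simp only [he]; rw [hxn k l' hl]
          rw [h1]
          exact ih k (Nat.lt_succ_self k) l'
  -- the improvement step
  have STEP : ∀ R : ℝ, 0 ≤ R → ∀ K : ℕ, (∀ k, K ≤ k → ∀ l', e k l' ≤ R) →
      ∃ K', ∀ k, K' ≤ k → ∀ l', e k l' ≤ c * R := by
    intro R hR K hK
    have hev : ∀ᶠ k in Filter.atTop, ∀ i : Fin m, K ≤ s i k :=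
      eventually_all.2 fun i => (hs2 i).eventually_ge_atTop K
    obtain ⟨K1', hK1'⟩ := Filter.eventually_atTop.1 hev
    set K1 := max K1' K with hK1def
    have hK1a : ∀ k, K1 ≤ k → ∀ i, K ≤ s i k := fun k hk i =>
      hK1' k (le_trans (le_max_left _ _) hk) i
    have hK1b : K ≤ K1 := le_max_right _ _
    have hMkR : ∀ k, K1 ≤ k → Mk k ≤ R := by
      intro k hk
      exact hMkle k R fun i => hK (s i k) (hK1a k hk i) i
    -- per-component improvement
    have percomp : ∀ l' : Fin m, ∃ Kl, ∀ k, Kl ≤ k → e k l' ≤ c * R := by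
      intro l'
      obtain ⟨k0, hk0a, hk0b⟩ := hs3 l' K1
      refine ⟨k0 + 1, ?_⟩
      have base : e (k0 + 1) l' ≤ c * R := by
        have h1 := SB k0 l' hk0b
        have h2 := hMkR k0 hk0a
        have h3 : e k0 l' ≤ R := hK k0 (le_trans hK1b hk0a) l'
        have habs := abs_nonneg (1 - ω)
        calc e (k0 + 1) l' ≤ ω * η * Mk k0 + |1 - ω| * e k0 l' := h1
          _ ≤ ω * η * R + |1 - ω| * R := add_le_add
              (mul_le_mul_of_nonneg_left h2 (mul_nonneg hω.1.le hηnn))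
              (mul_le_mul_of_nonneg_left h3 habs)
          _ = c * R := by rw [hc]; ring
      have ind : ∀ k, k0 + 1 ≤ k → e k l' ≤ c * R := by
        intro k hk
        induction k, hk using Nat.le_induction with
        | base => exact base
        | succ k hk ihk =>
          by_cases hl : l' ∈ J k
          · have h1 := SB k l' hl
            have h2 : Mk k ≤ R := hMkR k (le_trans (le_trans hk0a (Nat.le_succ k0)) hk)
            have habs := abs_nonneg (1 - ω)
            have hcRR : c * R ≤ R := mul_le_of_le_one_left hR hc1.le
            calc e (k + 1) l' ≤ ω * η * Mk k + |1 - ω| * e k l' := h1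
              _ ≤ ω * η * R + |1 - ω| * (c * R) := add_le_add
                  (mul_le_mul_of_nonneg_left h2 (mul_nonneg hω.1.le hηnn))
                  (mul_le_mul_of_nonneg_left ihk habs)
              _ ≤ ω * η * R + |1 - ω| * R := add_le_add le_rfl
                  (mul_le_mul_of_nonneg_left hcRR habs)
              _ = c * R := by rw [hc]; ring
          · have h1 : e (k+1) l' = e k l' := by simp only [he]; rw [hxn k l' hl]
            rw [h1]
            exact ihk
      exact ind
    choose Kl hKl using percomp
    refine ⟨Finset.univ.sup Kl, fun k hk l' => ?_⟩
    exact hKl l' k (le_trans (Finset.le_sup (Finset.mem_univ l')) hk)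
  -- iterate the improvement
  have hIter : ∀ t : ℕ, ∃ K, ∀ k, K ≤ k → ∀ l', e k l' ≤ c ^ t * B0 := by
    intro t
    induction t with
    | zero => exact ⟨0, fun k _ l' => by simpa using hB k l'⟩
    | succ t iht =>
      obtain ⟨K, hKt⟩ := iht
      obtain ⟨K', hK'⟩ := STEP (c ^ t * B0) (mul_nonneg (pow_nonneg hc0 t) hB0nn) K hKt
      refine ⟨K', fun k hk l' => ?_⟩
      calc e k l' ≤ c * (c ^ t * B0) := hK' k hk l'
        _ = c ^ (t + 1) * B0 := by ring
  -- conclude convergence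
  intro l
  have htend0 : Filter.Tendsto (fun k => e k l) Filter.atTop (nhds 0) := by
    rw [Metric.tendsto_atTop]
    intro ε hε
    have hpow : Filter.Tendsto (fun t => c ^ t * B0) Filter.atTop (nhds 0) := by
      have := (tendsto_pow_atTop_nhds_zero_of_lt_one hc0 hc1).mul_const B0
      simpa using this
    obtain ⟨t, ht⟩ := (Filter.eventually_atTop.1
      (hpow.eventually (eventually_lt_nhds hε))).imp (fun t h => h t le_rfl)
    obtain ⟨K, hK⟩ := hIter t
    refine ⟨K, fun k hk => ?_⟩
    rw [Real.dist_eq, sub_zero, abs_of_nonneg (henn k l)]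
    exact lt_of_le_of_lt (hK k hk l) ht
  rw [tendsto_pi_nhds]
  intro p
  have hdist : Filter.Tendsto (fun k => dist (x k l p) (xstar p)) Filter.atTop (nhds 0) := by
    apply squeeze_zero (fun k => dist_nonneg) (fun k => ?_) htend0
    rw [Real.dist_eq]
    exact abs_le_vnorm (fun r => x k l r - xstar r) p
  exact tendsto_iff_dist_tendsto_zero.2 hdist
end
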